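/- arXiv:1405.4418 — 6 statements merged into one kernel-verified Lean document; each statement's English description precedes it below -/
import Mathlib

section
/- Let ABC be a triangle of area 1 with cevians AK, BL, CM where K on BC, L on CA, M on AB satisfy |AM|/|MB| = x, |BK|/|KC| = y, |CL|/|LA| = z, and assume xyz ≠ 1 so the three cevians form a triangle PQR (P = AK ∩ CM, Q = AK ∩ BL, R = BL ∩ CM). Then the area of triangle PQR equals (1 - xyz)^2/((1 + x + xy)(1 + y + yz)(1 + z + zx)). -/
open MeasureTheory Pointwise

noncomputable def triArea (A B C : EuclideanSpace ℝ (Fin 2)) : ℝ :=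
  (volume (convexHull ℝ {A, B, C})).toReal

lemma routh_arith (x y z : ℝ) (hx : 0 < x) (hy : 0 < y) (hz : 0 < z) :
    (1/(1+y+y*z) - x/(1+x+x*y)) * (1/(1+z+z*x) - x*y/(1+x+x*y))
      - (y/(1+y+y*z) - x*y/(1+x+x*y)) * (z*x/(1+z+z*x) - x/(1+x+x*y))
    = (1 - x*y*z)^2 / ((1+x+x*y)*(1+y+y*z)*(1+z+z*x)) := by
  have h1 : (1+x+x*y) ≠ 0 := by positivity
  have h2 : (1+y+y*z) ≠ 0 := by positivity
  have h3 : (1+z+z*x) ≠ 0 := by positivity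
  field_simp
  ring

lemma seg_ratio {A B M : EuclideanSpace ℝ (Fin 2)} {x : ℝ}
    (hAB : A ≠ B) (hM : M ∈ segment ℝ A B) (hMB : M ≠ B) (hx : 0 < x)
    (hxr : dist A M / dist M B = x) :
    M - A = (x / (1 + x)) • (B - A) := by
  rw [segment_eq_image'] at hM
  obtain ⟨t, ⟨ht0, ht1⟩, rfl⟩ := hM
  have hBA : ‖B - A‖ ≠ 0 := by
    simpa [sub_eq_zero] using fun h => hAB h.symm
  have hAM : dist A (A + t • (B - A)) = t * ‖B - A‖ := by
    rw [dist_eq_norm]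
    have : A - (A + t • (B - A)) = (-t) • (B - A) := by module
    rw [this, norm_smul]
    simp [abs_of_nonneg ht0]
  have hMB' : dist (A + t • (B - A)) B = (1 - t) * ‖B - A‖ := by
    rw [dist_eq_norm]
    have : (A + t • (B - A)) - B = (t - 1) • (B - A) := by module
    rw [this, norm_smul]
    simp [abs_of_nonpos (by linarith : t - 1 ≤ 0)]
  have ht1' : t ≠ 1 := by
    rintro rfl
    exact hMB (by module)
  have hlt : t < 1 := lt_of_le_of_ne ht1 ht1'
  rw [hAM, hMB'] at hxr
  have ht : t / (1 - t) = x := by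
    rw [mul_div_mul_right _ _ hBA] at hxr
    exact hxr
  have htx : t = x / (1 + x) := by
    have h1t : (1 - t) ≠ 0 := by intro h; apply ht1'; linarith
    field_simp at ht
    have : (1:ℝ) + x ≠ 0 := by positivity
    field_simp
    linarith [ht]
  rw [htx]
  module

set_option maxHeartbeats 1000000 in
theorem routh_cevian_triangle_area
    (A B C M K L P Q R : EuclideanSpace ℝ (Fin 2)) (x y z : ℝ)
    (hABC : AffineIndependent ℝ ![A, B, C])
    (harea : triArea A B C = 1)
    (hx : 0 < x) (hy : 0 < y) (hz : 0 < z)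
    (hxyz : x * y * z ≠ 1)
    (hM : M ∈ segment ℝ A B) (hMA : M ≠ A) (hMB : M ≠ B)
    (hK : K ∈ segment ℝ B C) (hKB : K ≠ B) (hKC : K ≠ C)
    (hL : L ∈ segment ℝ C A) (hLC : L ≠ C) (hLA : L ≠ A)
    (hxr : dist A M / dist M B = x)
    (hyr : dist B K / dist K C = y)
    (hzr : dist C L / dist L A = z)
    (hP1 : P ∈ affineSpan ℝ {A, K}) (hP2 : P ∈ affineSpan ℝ {C, M})
    (hQ1 : Q ∈ affineSpan ℝ {A, K}) (hQ2 : Q ∈ affineSpan ℝ {B, L})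
    (hR1 : R ∈ affineSpan ℝ {B, L}) (hR2 : R ∈ affineSpan ℝ {C, M}) :
    triArea P Q R =
      (1 - x * y * z) ^ 2 / ((1 + x + x * y) * (1 + y + y * z) * (1 + z + z * x)) := by
  classical
  have hinj := hABC.injective
  have hAB : A ≠ B := by
    intro h
    have : (0 : Fin 3) = 1 := hinj (by simpa using h)
    exact absurd this (by decide)
  have hBC : B ≠ C := by
    intro h
    have : (1 : Fin 3) = 2 := hinj (by simpa using h)
    exact absurd this (by decide)
  have hCA : C ≠ A := by
    intro h
    have : (2 : Fin 3) = 0 := hinj (by simpa using h)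
    exact absurd this (by decide)
  -- linear independence of edge vectors
  have hli : ∀ a b : ℝ, a • (B - A) + b • (C - A) = 0 → a = 0 ∧ b = 0 := by
    intro a b hab
    have h := (affineIndependent_iff_of_fintype ℝ ![A, B, C]).mp hABC ![-(a+b), a, b]
      (by simp [Fin.sum_univ_three]) ?_
    · exact ⟨by simpa using h 1, by simpa using h 2⟩
    · rw [Finset.weightedVSub_eq_weightedVSubOfPoint_of_sum_eq_zero _ _ _
        (by simp [Fin.sum_univ_three]) A, Finset.weightedVSubOfPoint_apply]
      simpa [Fin.sum_univ_three] using hab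
  -- side point parametrizations
  have hMe : M - A = (x / (1 + x)) • (B - A) := seg_ratio hAB hM hMB hx hxr
  have hKe : K - B = (y / (1 + y)) • (C - B) := seg_ratio hBC hK hKC hy hyr
  have hLe : L - C = (z / (1 + z)) • (A - C) := seg_ratio hCA hL hLA hz hzr
  set m : ℝ := x / (1 + x) with hm
  set k : ℝ := y / (1 + y) with hk
  set l : ℝ := z / (1 + z) with hl
  have hKA : K - A = (1 - k) • (B - A) + k • (C - A) := by
    linear_combination (norm := module) hKe
  have hMC : M - C = m • (B - A) - (C - A) := by
    linear_combination (norm := module) hMe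
  have hLB : L - B = (1 - l) • (C - A) - (B - A) := by
    linear_combination (norm := module) hLe
  -- intersection parameters
  obtain ⟨tP, htP⟩ := (vadd_left_mem_affineSpan_pair (k := ℝ)).mp
    (show (P -ᵥ A) +ᵥ A ∈ affineSpan ℝ {A, K} by rwa [vsub_vadd])
  obtain ⟨uP, huP⟩ := (vadd_left_mem_affineSpan_pair (k := ℝ)).mp
    (show (P -ᵥ C) +ᵥ C ∈ affineSpan ℝ {C, M} by rwa [vsub_vadd])
  obtain ⟨tQ, htQ⟩ := (vadd_left_mem_affineSpan_pair (k := ℝ)).mp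
    (show (Q -ᵥ A) +ᵥ A ∈ affineSpan ℝ {A, K} by rwa [vsub_vadd])
  obtain ⟨sQ, hsQ⟩ := (vadd_left_mem_affineSpan_pair (k := ℝ)).mp
    (show (Q -ᵥ B) +ᵥ B ∈ affineSpan ℝ {B, L} by rwa [vsub_vadd])
  obtain ⟨sR, hsR⟩ := (vadd_left_mem_affineSpan_pair (k := ℝ)).mp
    (show (R -ᵥ B) +ᵥ B ∈ affineSpan ℝ {B, L} by rwa [vsub_vadd])
  obtain ⟨uR, huR⟩ := (vadd_left_mem_affineSpan_pair (k := ℝ)).mp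
    (show (R -ᵥ C) +ᵥ C ∈ affineSpan ℝ {C, M} by rwa [vsub_vadd])
  simp only [vsub_eq_sub] at htP huP htQ hsQ hsR huR
  -- scalar equations from linear independence
  obtain ⟨hp1, hp2⟩ := hli (tP * (1 - k) - uP * m) (tP * k + uP - 1)
    (by linear_combination (norm := module) htP - huP - tP • hKA + uP • hMC)
  obtain ⟨hq1, hq2⟩ := hli (tQ * (1 - k) + sQ - 1) (tQ * k - sQ * (1 - l))
    (by linear_combination (norm := module) htQ - hsQ - tQ • hKA + sQ • hLB)
  obtain ⟨hr1, hr2⟩ := hli (1 - sR - uR * m) (sR * (1 - l) + uR - 1)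
    (by linear_combination (norm := module) hsR - huR - sR • hLB + uR • hMC)
  -- solve for the parameters
  have h1x : (1:ℝ) + x ≠ 0 := by positivity
  have h1y : (1:ℝ) + y ≠ 0 := by positivity
  have h1z : (1:ℝ) + z ≠ 0 := by positivity
  have hD1 : (1:ℝ) + x + x*y ≠ 0 := by positivity
  have hD2 : (1:ℝ) + y + y*z ≠ 0 := by positivity
  have hD3 : (1:ℝ) + z + z*x ≠ 0 := by positivity
  have EP : tP * ((1 - k) + k * m) = m := by linear_combination hp1 + m * hp2
  have EQ : tQ * ((1 - k) * (1 - l) + k) = 1 - l := by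
    linear_combination (1 - l) * hq1 + hq2
  have ER : sR * (1 - (1 - l) * m) = 1 - m := by linear_combination -hr1 - m * hr2
  have hkm : (1 - k) + k * m = (1+x+x*y)/((1+x)*(1+y)) := by
    rw [hk, hm]; field_simp; ring
  have hklQ : (1 - k) * (1 - l) + k = (1+y+y*z)/((1+y)*(1+z)) := by
    rw [hk, hl]; field_simp; ring
  have hlmR : 1 - (1 - l) * m = (1+z+z*x)/((1+z)*(1+x)) := by
    rw [hl, hm]; field_simp; ring
  have hdenP : (1 - k) + k * m ≠ 0 := by rw [hkm]; positivity
  have hdenQ : (1 - k) * (1 - l) + k ≠ 0 := by rw [hklQ]; positivity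
  have hdenR : 1 - (1 - l) * m ≠ 0 := by rw [hlmR]; positivity
  have htPv : tP = m / ((1 - k) + k * m) := (eq_div_iff hdenP).mpr EP
  have htQv : tQ = (1 - l) / ((1 - k) * (1 - l) + k) := (eq_div_iff hdenQ).mpr EQ
  have hsRv : sR = (1 - m) / (1 - (1 - l) * m) := (eq_div_iff hdenR).mpr ER
  have sP1 : tP * (1 - k) = x / (1 + x + x*y) := by
    rw [htPv, hkm, hk, hm]; field_simp; ring
  have sP2 : tP * k = x*y / (1 + x + x*y) := by
    rw [htPv, hkm, hk, hm]; field_simp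
  have sQ1 : tQ * (1 - k) = 1 / (1 + y + y*z) := by
    rw [htQv, hklQ, hk, hl]; field_simp; ring
  have sQ2 : tQ * k = y / (1 + y + y*z) := by
    rw [htQv, hklQ, hk, hl]; field_simp; ring
  have sR1 : 1 - sR = z*x / (1 + z + z*x) := by
    rw [hsRv, hlmR, hm]; field_simp; ring
  have sR2 : sR * (1 - l) = 1 / (1 + z + z*x) := by
    rw [hsRv, hlmR, hl, hm]; field_simp; ring
  have hPA : P - A = (tP * (1 - k)) • (B - A) + (tP * k) • (C - A) := by
    linear_combination (norm := module) tP • hKA - htP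
  have hQA : Q - A = (tQ * (1 - k)) • (B - A) + (tQ * k) • (C - A) := by
    linear_combination (norm := module) tQ • hKA - htQ
  have hRA : R - A = (1 - sR) • (B - A) + (sR * (1 - l)) • (C - A) := by
    linear_combination (norm := module) sR • hLB - hsR
  rw [sP1, sP2] at hPA
  rw [sQ1, sQ2] at hQA
  rw [sR1, sR2] at hRA
  set pa : ℝ := x / (1 + x + x*y) with hpa
  set pb : ℝ := x*y / (1 + x + x*y) with hpb
  set qa : ℝ := 1 / (1 + y + y*z) with hqa
  set qb : ℝ := y / (1 + y + y*z) with hqb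
  set ra : ℝ := z*x / (1 + z + z*x) with hra
  set rb : ℝ := 1 / (1 + z + z*x) with hrb
  have hQP : Q - P = (qa - pa) • (B - A) + (qb - pb) • (C - A) := by
    linear_combination (norm := module) hQA - hPA
  have hRP : R - P = (ra - pa) • (B - A) + (rb - pb) • (C - A) := by
    linear_combination (norm := module) hRA - hPA
  -- basis
  have hlin : LinearIndependent ℝ ![B - A, C - A] :=
    LinearIndependent.pair_iff.mpr hli
  have hcard : Fintype.card (Fin 2) = Module.finrank ℝ (EuclideanSpace ℝ (Fin 2)) := by
    simp [finrank_euclideanSpace_fin]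
  let bas : Module.Basis (Fin 2) ℝ (EuclideanSpace ℝ (Fin 2)) :=
    basisOfLinearIndependentOfCardEqFinrank hlin hcard
  have hb0 : bas 0 = B - A := by
    rw [show bas = basisOfLinearIndependentOfCardEqFinrank hlin hcard from rfl,
      coe_basisOfLinearIndependentOfCardEqFinrank]
    simp
  have hb1 : bas 1 = C - A := by
    rw [show bas = basisOfLinearIndependentOfCardEqFinrank hlin hcard from rfl,
      coe_basisOfLinearIndependentOfCardEqFinrank]
    simp
  let L0 : EuclideanSpace ℝ (Fin 2) →ₗ[ℝ] EuclideanSpace ℝ (Fin 2) :=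
    bas.constr ℝ ![Q - P, R - P]
  have hL00 : L0 (B - A) = Q - P := by
    rw [← hb0]
    exact bas.constr_basis ℝ ![Q - P, R - P] 0
  have hL01 : L0 (C - A) = R - P := by
    rw [← hb1]
    exact bas.constr_basis ℝ ![Q - P, R - P] 1
  -- determinant
  have hrepr0 : bas.repr (Q - P) = Finsupp.single 0 (qa - pa) + Finsupp.single 1 (qb - pb) := by
    rw [hQP, ← hb0, ← hb1]
    simp [map_add, _root_.map_smul, Module.Basis.repr_self, Finsupp.smul_single]
  have hrepr1 : bas.repr (R - P) = Finsupp.single 0 (ra - pa) + Finsupp.single 1 (rb - pb) := by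
    rw [hRP, ← hb0, ← hb1]
    simp [map_add, _root_.map_smul, Module.Basis.repr_self, Finsupp.smul_single]
  have hdet : LinearMap.det L0 = (qa - pa) * (rb - pb) - (qb - pb) * (ra - pa) := by
    rw [← LinearMap.det_toMatrix bas, Matrix.det_fin_two]
    simp only [LinearMap.toMatrix_apply, hb0, hb1, hL00, hL01, hrepr0, hrepr1]
    simp [Finsupp.single_apply]
    ring
  -- the affine map
  let T : EuclideanSpace ℝ (Fin 2) →ᵃ[ℝ] EuclideanSpace ℝ (Fin 2) :=
    { toFun := fun v => P + L0 (-A + v)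
      linear := L0
      map_vadd' := fun p v => by
        simp only [vadd_eq_add, map_add]
        abel }
  have hTA : T A = P := by
    show P + L0 (-A + A) = P
    simp
  have hTB : T B = Q := by
    show P + L0 (-A + B) = Q
    rw [show -A + B = B - A by abel, hL00]
    abel
  have hTC : T C = R := by
    show P + L0 (-A + C) = R
    rw [show -A + C = C - A by abel, hL01]
    abel
  have himg : T '' (convexHull ℝ {A, B, C}) = convexHull ℝ {P, Q, R} := by
    rw [AffineMap.image_convexHull]
    congr 1
    rw [Set.image_insert_eq, Set.image_insert_eq, Set.image_singleton, hTA, hTB, hTC]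
  have hvadd : T '' (convexHull ℝ {A, B, C})
      = P +ᵥ (L0 '' ((-A) +ᵥ (convexHull ℝ {A, B, C}))) := by
    rw [← Set.image_vadd, ← Set.image_vadd, ← Set.image_comp, ← Set.image_comp]
    rfl
  have hvol : volume (convexHull ℝ ({P, Q, R} : Set (EuclideanSpace ℝ (Fin 2))))
      = ENNReal.ofReal |LinearMap.det L0|
        * volume (convexHull ℝ ({A, B, C} : Set (EuclideanSpace ℝ (Fin 2)))) := by
    rw [← himg, hvadd, measure_vadd, Measure.addHaar_image_linearMap, measure_vadd]
  have hfin : volume (convexHull ℝ ({A, B, C} : Set (EuclideanSpace ℝ (Fin 2)))) ≠ ⊤ :=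
    (((Set.finite_singleton C).insert B |>.insert A).isCompact_convexHull ℝ).measure_lt_top.ne
  have harea' : triArea P Q R = |LinearMap.det L0| * triArea A B C := by
    rw [triArea, triArea, hvol, ENNReal.toReal_mul, ENNReal.toReal_ofReal (abs_nonneg _)]
  rw [harea', harea, mul_one, hdet]
  have hfinal := routh_arith x y z hx hy hz
  rw [hpa, hpb, hqa, hqb, hra, hrb]
  rw [show (qa - pa) * (rb - pb) - (qb - pb) * (ra - pa)
      = (1 - x*y*z)^2 / ((1+x+x*y)*(1+y+y*z)*(1+z+z*x)) from by
    rw [hpa, hpb, hqa, hqb, hra, hrb]; linear_combination hfinal]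
  exact abs_of_nonneg (by positivity)
end

section
/- Let ABCD be a tetrahedron of volume 1. Choose M on edge AB, N on edge BC, K on edge CD, L on edge DA with |CK|/|KD| = x, |DL|/|LA| = y, |AM|/|MB| = z, |BN|/|NC| = t, all positive. Then the volume of tetrahedron KLMN equals |1 - xyzt| / ((1+x)(1+y)(1+z)(1+t)). -/
open MeasureTheory Pointwise

lemma seg_combo {P Q R : EuclideanSpace ℝ (Fin 3)} {r : ℝ} (hr : 0 < r)
    (h : R ∈ segment ℝ P Q) (hP : R ≠ P) (hQ : R ≠ Q)
    (hd : dist P R / dist R Q = r) :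
    R = (1/(1+r)) • P + (r/(1+r)) • Q := by
  obtain ⟨u, v, hu, hv, huv, rfl⟩ := h
  have hPQ : P ≠ Q := by
    rintro rfl
    exact hP (by rw [← add_smul, huv, one_smul])
  have hnorm : dist P Q ≠ 0 := dist_ne_zero.2 hPQ
  have hu1 : u = 1 - v := by linarith
  subst hu1
  have h1 : dist P ((1 - v) • P + v • Q) = v * dist P Q := by
    rw [dist_eq_norm, dist_eq_norm]
    have h2 : P - ((1 - v) • P + v • Q) = v • (P - Q) := by module
    rw [h2, norm_smul, Real.norm_eq_abs, abs_of_nonneg hv]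
  have h2 : dist ((1 - v) • P + v • Q) Q = (1 - v) * dist P Q := by
    rw [dist_eq_norm, dist_eq_norm]
    have h3 : ((1 - v) • P + v • Q) - Q = (1 - v) • (P - Q) := by module
    rw [h3, norm_smul, Real.norm_eq_abs, abs_of_nonneg hu]
  rw [h1, h2, mul_comm v, mul_comm (1-v), mul_div_mul_left _ _ hnorm] at hd
  have huv0 : 1 - v ≠ 0 := by
    rintro h0
    apply hQ
    have : v = 1 := by linarith
    rw [h0, this, zero_smul, zero_add, one_smul]
  have hveq : v = r * (1 - v) := by
    field_simp at hd; linarith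
  have h1r : (1:ℝ) + r ≠ 0 := by positivity
  have hv' : v = r / (1 + r) := by
    field_simp; linarith
  have hu' : 1 - v = 1 / (1 + r) := by
    field_simp; linarith [hveq]
  rw [hv']
  congr 1
  rw [show 1 - r/(1+r) = 1/(1+r) by field_simp; ring]

noncomputable def tetVol (A B C D : EuclideanSpace ℝ (Fin 3)) : ℝ :=
  (volume (convexHull ℝ {A, B, C, D})).toReal

theorem routh_tetrahedron_KLMN
    (A B C D M N K L : EuclideanSpace ℝ (Fin 3)) (x y z t : ℝ)
    (hABCD : AffineIndependent ℝ ![A, B, C, D])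
    (hvol : tetVol A B C D = 1)
    (hx : 0 < x) (hy : 0 < y) (hz : 0 < z) (ht : 0 < t)
    (hM : M ∈ segment ℝ A B) (hMA : M ≠ A) (hMB : M ≠ B)
    (hN : N ∈ segment ℝ B C) (hNB : N ≠ B) (hNC : N ≠ C)
    (hK : K ∈ segment ℝ C D) (hKC : K ≠ C) (hKD : K ≠ D)
    (hL : L ∈ segment ℝ D A) (hLD : L ≠ D) (hLA : L ≠ A)
    (hxr : dist C K / dist K D = x)
    (hyr : dist D L / dist L A = y)
    (hzr : dist A M / dist M B = z)
    (htr : dist B N / dist N C = t) :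
    tetVol K L M N = |1 - x * y * z * t| / ((1 + x) * (1 + y) * (1 + z) * (1 + t)) := by
  have hKx := seg_combo hx hK hKC hKD hxr
  have hLy := seg_combo hy hL hLD hLA hyr
  have hMz := seg_combo hz hM hMA hMB hzr
  have hNt := seg_combo ht hN hNB hNC htr
  have hx1 : (1:ℝ) + x ≠ 0 := by positivity
  have hy1 : (1:ℝ) + y ≠ 0 := by positivity
  have hz1 : (1:ℝ) + z ≠ 0 := by positivity
  have ht1 : (1:ℝ) + t ≠ 0 := by positivity
  -- basis from affine independence
  have hli0 := (affineIndependent_iff_linearIndependent_vsub ℝ ![A,B,C,D] 0).1 hABCD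
  have hli : LinearIndependent ℝ ![B - A, C - A, D - A] := by
    have h2 := hli0.comp
      (fun i : Fin 3 => (⟨i.succ, Fin.succ_ne_zero i⟩ : {j : Fin 4 // j ≠ 0}))
      (fun a b h => by
        have := congrArg Subtype.val h
        simpa [Fin.succ_inj] using this)
    convert h2 using 1
    funext i
    fin_cases i <;> simp [Function.comp, vsub_eq_sub]
    rfl
  have hcard : Fintype.card (Fin 3)
      = Module.finrank ℝ (EuclideanSpace ℝ (Fin 3)) := by
    simp [finrank_euclideanSpace]
  let b : Module.Basis (Fin 3) ℝ (EuclideanSpace ℝ (Fin 3)) :=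
    basisOfLinearIndependentOfCardEqFinrank hli hcard
  have hb : ⇑b = ![B - A, C - A, D - A] :=
    coe_basisOfLinearIndependentOfCardEqFinrank hli hcard
  have hb0 : b 0 = B - A := by rw [hb]; rfl
  have hb1 : b 1 = C - A := by rw [hb]; rfl
  have hb2 : b 2 = D - A := by rw [hb]; rfl
  -- the matrix
  set S : Matrix (Fin 3) (Fin 3) ℝ :=
    ![![0, z/(1+z), 1/(1+t)],
      ![-1/(1+x), -1/(1+x), t/(1+t) - 1/(1+x)],
      ![1/(1+y) - x/(1+x), -x/(1+x), -x/(1+x)]] with hS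
  set fl : EuclideanSpace ℝ (Fin 3) →ₗ[ℝ] EuclideanSpace ℝ (Fin 3) := Matrix.toLin b b S with hfl
  have hdet : LinearMap.det fl = (1 - x*y*z*t)/((1+x)*(1+y)*(1+z)*(1+t)) := by
    rw [hfl, LinearMap.det_toLin, Matrix.det_fin_three, hS]
    simp only [Matrix.cons_val', Matrix.cons_val_zero, Matrix.cons_val_one, Matrix.head_cons,
      Matrix.empty_val', Matrix.cons_val_fin_one, Matrix.head_fin_const, Matrix.cons_val_two,
      Matrix.tail_cons]
    field_simp
    ring
  have hfb : ∀ j, fl (b j) = ∑ i, S i j • b i := fun j => Matrix.toLin_self b b S j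
  have hf0 : fl (B - A) = L - K := by
    have h := hfb 0
    simp only [Fin.sum_univ_three, hb0, hb1, hb2, hS, Matrix.cons_val_zero,
      Matrix.cons_val_one, Matrix.head_cons, Matrix.cons_val_two, Matrix.tail_cons] at h
    rw [h, hKx, hLy]
    match_scalars <;> field_simp <;> ring
  have hf1 : fl (C - A) = M - K := by
    have h := hfb 1
    simp only [Fin.sum_univ_three, hb0, hb1, hb2, hS, Matrix.cons_val_zero,
      Matrix.cons_val_one, Matrix.head_cons, Matrix.cons_val_two, Matrix.tail_cons] at h
    rw [h, hKx, hMz]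
    match_scalars <;> field_simp <;> ring
  have hf2 : fl (D - A) = N - K := by
    have h := hfb 2
    simp only [Fin.sum_univ_three, hb0, hb1, hb2, hS, Matrix.cons_val_zero,
      Matrix.cons_val_one, Matrix.head_cons, Matrix.cons_val_two, Matrix.tail_cons] at h
    rw [h, hKx, hNt]
    match_scalars <;> field_simp <;> ring
  -- set computations
  set s0 : Set (EuclideanSpace ℝ (Fin 3)) :=
    convexHull ℝ {(0:EuclideanSpace ℝ (Fin 3)), B - A, C - A, D - A} with hs0
  have hch1 : convexHull ℝ {A, B, C, D} = A +ᵥ s0 := by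
    rw [hs0, ← convexHull_vadd]
    congr 1
    rw [← Set.image_vadd, Set.image_insert_eq, Set.image_insert_eq, Set.image_insert_eq,
      Set.image_singleton]
    simp [vadd_eq_add]
  have hch2 : convexHull ℝ {K, L, M, N} = K +ᵥ (fl '' s0) := by
    rw [hs0, LinearMap.image_convexHull, ← convexHull_vadd]
    congr 1
    rw [Set.image_insert_eq, Set.image_insert_eq, Set.image_insert_eq, Set.image_singleton,
      map_zero, hf0, hf1, hf2]
    rw [← Set.image_vadd, Set.image_insert_eq, Set.image_insert_eq, Set.image_insert_eq,
      Set.image_singleton]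
    simp [vadd_eq_add]
  have hfin : volume s0 ≠ ⊤ := by
    refine (IsCompact.measure_lt_top ?_).ne
    exact (Set.toFinite _).isCompact_convexHull (𝕜 := ℝ)
  have key : volume (convexHull ℝ {K, L, M, N})
      = ENNReal.ofReal |LinearMap.det fl| * volume (convexHull ℝ {A, B, C, D}) := by
    rw [hch2, hch1, measure_vadd, measure_vadd, Measure.addHaar_image_linearMap]
  have hAB1 : volume (convexHull ℝ {A, B, C, D}) = 1 := by
    have h1 : tetVol A B C D = (volume (convexHull ℝ {A, B, C, D})).toReal := rfl
    rw [h1] at hvol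
    have hne : volume (convexHull ℝ {A, B, C, D}) ≠ ⊤ := by
      rw [hch1, measure_vadd]; exact hfin
    rw [← ENNReal.ofReal_toReal hne, hvol]; simp
  rw [tetVol, key, hAB1, mul_one, ENNReal.toReal_ofReal (abs_nonneg _), hdet]
  rw [abs_div]
  congr 1
  rw [abs_of_pos (by positivity)]
end

section
/- Let ABCD be a tetrahedron with K on edge CD, L on edge DA, M on edge AB, N on edge BC, with ratios x = |CK|/|KD|, y = |DL|/|LA|, z = |AM|/|MB|, t = |BN|/|NC|. The four planes through (A,B,K), (B,C,L), (C,D,M), (D,A,N) have a common point if and only if xyzt = 1. -/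
open MeasureTheory

private lemma mem_affineSpan_triple {E : Type*} [AddCommGroup E] [Module ℝ E] (X Y Z P : E) :
    P ∈ affineSpan ℝ ({X, Y, Z} : Set E) ↔ ∃ α β : ℝ, α • (Y - X) + β • (Z - X) = P - X := by
  have hX : X ∈ ({X, Y, Z} : Set E) := Set.mem_insert _ _
  rw [← AffineSubspace.vsub_right_mem_direction_iff_mem (subset_affineSpan ℝ _ hX) P,
    direction_affineSpan, vectorSpan_eq_span_vsub_set_right ℝ hX]
  have himg : (fun q => q -ᵥ X) '' ({X, Y, Z} : Set E) = {(0:E), Y - X, Z - X} := by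
    simp [Set.image_insert_eq, vsub_eq_sub]
  rw [himg, Submodule.span_insert_zero, Submodule.mem_span_pair]
  simp [vsub_eq_sub]

private lemma seg_rep {E : Type*} [NormedAddCommGroup E] [NormedSpace ℝ E] {P Q R : E} {s : ℝ}
    (h : R ∈ segment ℝ P Q) (hRP : R ≠ P) (hRQ : R ≠ Q)
    (hr : dist P R / dist R Q = s) :
    R = P + (s / (1 + s)) • (Q - P) := by
  obtain ⟨a, b, ha, hb, hab, hcomb⟩ := h
  have ha' : a = 1 - b := by linarith
  have hRPv : R - P = b • (Q - P) := by
    rw [← hcomb, ha']; module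
  have hQRv : Q - R = a • (Q - P) := by
    rw [← hcomb, ha']; module
  have hbne : 0 < b := by
    rcases hb.lt_or_eq with h' | h'
    · exact h'
    · exact absurd (by rw [← sub_eq_zero, hRPv, ← h', zero_smul]) hRP
  have hane : 0 < a := by
    rcases ha.lt_or_eq with h' | h'
    · exact h'
    · refine absurd ?_ hRQ
      have h0 : Q - R = 0 := by rw [hQRv, ← h', zero_smul]
      exact (sub_eq_zero.mp h0).symm
  have hQP : Q ≠ P := by
    rintro rfl
    apply hRP
    rw [← sub_eq_zero, hRPv, sub_self, smul_zero]
  have hnorm : (0:ℝ) < ‖Q - P‖ := by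
    rw [norm_pos_iff, sub_ne_zero]; exact hQP
  have hd1 : dist P R = b * ‖Q - P‖ := by
    rw [dist_comm, dist_eq_norm, hRPv, norm_smul, Real.norm_of_nonneg hb]
  have hd2 : dist R Q = a * ‖Q - P‖ := by
    rw [dist_eq_norm, ← norm_neg, neg_sub, hQRv, norm_smul, Real.norm_of_nonneg ha]
  have hs' : b / a = s := by
    rw [← hr, hd1, hd2, mul_div_mul_right _ _ (ne_of_gt hnorm)]
  have hbs : b = s * a := by
    rw [← hs']; field_simp
  have h1s : 0 < 1 + s := by
    have : 0 < s := by rw [← hs']; positivity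
    linarith
  have haval : a = 1 / (1 + s) := by
    rw [eq_div_iff (ne_of_gt h1s)]
    linarith [hbs]
  have hbval : b = s / (1 + s) := by
    rw [hbs, haval]; ring
  rw [← hbval, ← hRPv]; abel

theorem ceva_tetrahedron
    (A B C D M N K L : EuclideanSpace ℝ (Fin 3)) (x y z t : ℝ)
    (hABCD : AffineIndependent ℝ ![A, B, C, D])
    (hx : 0 < x) (hy : 0 < y) (hz : 0 < z) (ht : 0 < t)
    (hM : M ∈ segment ℝ A B) (hMA : M ≠ A) (hMB : M ≠ B)
    (hN : N ∈ segment ℝ B C) (hNB : N ≠ B) (hNC : N ≠ C)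
    (hK : K ∈ segment ℝ C D) (hKC : K ≠ C) (hKD : K ≠ D)
    (hL : L ∈ segment ℝ D A) (hLD : L ≠ D) (hLA : L ≠ A)
    (hxr : dist C K / dist K D = x)
    (hyr : dist D L / dist L A = y)
    (hzr : dist A M / dist M B = z)
    (htr : dist B N / dist N C = t) :
    (∃ P : EuclideanSpace ℝ (Fin 3),
        P ∈ affineSpan ℝ {A, B, K} ∧ P ∈ affineSpan ℝ {B, C, L} ∧
        P ∈ affineSpan ℝ {C, D, M} ∧ P ∈ affineSpan ℝ {D, A, N}) ↔
      x * y * z * t = 1 := by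
  have hx1 : (1:ℝ) + x ≠ 0 := by positivity
  have hy1 : (1:ℝ) + y ≠ 0 := by positivity
  have hz1 : (1:ℝ) + z ≠ 0 := by positivity
  have ht1 : (1:ℝ) + t ≠ 0 := by positivity
  have hKrep : K = C + (x/(1+x)) • (D - C) := seg_rep hK hKC hKD hxr
  have hLrep : L = D + (y/(1+y)) • (A - D) := seg_rep hL hLD hLA hyr
  have hMrep : M = A + (z/(1+z)) • (B - A) := seg_rep hM hMA hMB hzr
  have hNrep : N = B + (t/(1+t)) • (C - B) := seg_rep hN hNB hNC htr
  have hli : ∀ p q r : ℝ, p•(B - A) + q•(C - A) + r•(D - A) = 0 → p = 0 ∧ q = 0 ∧ r = 0 := by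
    intro p q r hpqr
    rw [affineIndependent_iff] at hABCD
    have key := hABCD Finset.univ ![-(p+q+r), p, q, r]
      (by simp [Fin.sum_univ_four]; ring)
      (by
        simp only [Fin.sum_univ_four, Matrix.cons_val_zero, Matrix.cons_val_one,
          Matrix.head_cons, Matrix.cons_val_two, Matrix.tail_cons, Matrix.cons_val_three]
        linear_combination (norm := module) hpqr)
    refine ⟨?_, ?_, ?_⟩
    · simpa using key 1 (Finset.mem_univ _)
    · simpa using key 2 (Finset.mem_univ _)
    · simpa using key 3 (Finset.mem_univ _)
  have huniq : ∀ p₁ q₁ r₁ p₂ q₂ r₂ : ℝ,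
      p₁•(B - A) + q₁•(C - A) + r₁•(D - A) = p₂•(B - A) + q₂•(C - A) + r₂•(D - A) →
      p₁ = p₂ ∧ q₁ = q₂ ∧ r₁ = r₂ := by
    intro p₁ q₁ r₁ p₂ q₂ r₂ hEq
    have h0 : (p₁-p₂)•(B - A) + (q₁-q₂)•(C - A) + (r₁-r₂)•(D - A) = 0 := by
      linear_combination (norm := module) hEq
    obtain ⟨e1, e2, e3⟩ := hli _ _ _ h0
    exact ⟨by linarith, by linarith, by linarith⟩
  constructor
  · rintro ⟨P, h1, h2, h3, h4⟩
    rw [mem_affineSpan_triple] at h1 h2 h3 h4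
    obtain ⟨α₁, β₁, e1⟩ := h1
    obtain ⟨α₂, β₂, e2⟩ := h2
    obtain ⟨α₃, β₃, e3⟩ := h3
    obtain ⟨α₄, β₄, e4⟩ := h4
    set p := α₁ with hpdef
    set q := β₁*(1/(1+x)) with hqdef
    set r := β₁*(x/(1+x)) with hrdef
    have hP : P - A = p•(B - A) + q•(C - A) + r•(D - A) := by
      rw [hqdef, hrdef, ← e1, hKrep]
      match_scalars <;> field_simp <;> ring
    have E1 : r = x * q := by
      rw [hqdef, hrdef]; field_simp
    -- plane 2
    have hPB : P - B = (p-1)•(B - A) + q•(C - A) + r•(D - A) := by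
      linear_combination (norm := module) hP
    have h2eq : (-α₂-β₂)•(B - A) + α₂•(C - A) + (β₂*(1/(1+y)))•(D - A)
        = (p-1)•(B - A) + q•(C - A) + r•(D - A) := by
      rw [← hPB, ← e2, hLrep]
      match_scalars <;> field_simp <;> ring
    obtain ⟨hB2, hC2, hD2⟩ := huniq _ _ _ _ _ _ h2eq
    have hD2' : β₂ = r + y*r := by field_simp at hD2; linear_combination hD2
    have E2 : y * r = 1 - p - q - r := by linear_combination -hB2 - hC2 - hD2'
    -- plane 3
    have hPC : P - C = p•(B - A) + (q-1)•(C - A) + r•(D - A) := by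
      linear_combination (norm := module) hP
    have h3eq : (β₃*(z/(1+z)))•(B - A) + (-α₃-β₃)•(C - A) + α₃•(D - A)
        = p•(B - A) + (q-1)•(C - A) + r•(D - A) := by
      rw [← hPC, ← e3, hMrep]
      match_scalars <;> field_simp <;> ring
    obtain ⟨hB3, hC3, hD3⟩ := huniq _ _ _ _ _ _ h3eq
    have hB3' : β₃ * z = p + p * z := by field_simp at hB3; linear_combination hB3
    have E3 : p = z * (1 - p - q - r) := by linear_combination -hB3' - z*hC3 - z*hD3
    -- plane 4
    have hPD : P - D = p•(B - A) + q•(C - A) + (r-1)•(D - A) := by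
      linear_combination (norm := module) hP
    have h4eq : (β₄*(1/(1+t)))•(B - A) + (β₄*(t/(1+t)))•(C - A) + (-α₄-β₄)•(D - A)
        = p•(B - A) + q•(C - A) + (r-1)•(D - A) := by
      rw [← hPD, ← e4, hNrep]
      match_scalars <;> field_simp <;> ring
    obtain ⟨hB4, hC4, hD4⟩ := huniq _ _ _ _ _ _ h4eq
    have E4 : q = t * p := by linear_combination t*hB4 - hC4
    -- conclude
    have hane : 1 - p - q - r ≠ 0 := by
      intro h0
      have hp0 : p = 0 := by rw [E3, h0, mul_zero]
      have hq0 : q = 0 := by rw [E4, hp0, mul_zero]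
      have hr0 : r = 0 := by rw [E1, hq0, mul_zero]
      rw [hp0, hq0, hr0] at h0; norm_num at h0
    have key : (x*y*z*t) * (1-p-q-r) = 1 * (1-p-q-r) := by
      calc x*y*z*t*(1-p-q-r) = x*y*t*(z*(1-p-q-r)) := by ring
        _ = x*y*t*p := by rw [← E3]
        _ = x*y*(t*p) := by ring
        _ = x*y*q := by rw [← E4]
        _ = y*(x*q) := by ring
        _ = y*r := by rw [← E1]
        _ = 1-p-q-r := E2
        _ = 1 * (1-p-q-r) := (one_mul _).symm
    exact mul_right_cancel₀ hane key
  · intro h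
    have hD0 : (1:ℝ) + z + z*t + z*t*x ≠ 0 := by positivity
    obtain ⟨a, ha⟩ : ∃ a : ℝ, (1 + z + z*t + z*t*x) * a = 1 :=
      ⟨1/(1 + z + z*t + z*t*x), by field_simp⟩
    have hyrel : y * (z*t*x*a) = a := by
      have e : y * (z*t*x*a) = (x*y*z*t)*a := by ring
      rw [e, h, one_mul]
    refine ⟨A + ((z*a)•(B - A) + ((z*t)*a)•(C - A) + ((z*t*x)*a)•(D - A)), ?_, ?_, ?_, ?_⟩
    · rw [mem_affineSpan_triple]
      refine ⟨z*a, (z*t)*a*(1+x), ?_⟩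
      rw [hKrep]
      match_scalars <;> field_simp <;> ring
    · rw [mem_affineSpan_triple]
      refine ⟨(z*t)*a, (1+y)*((z*t*x)*a), ?_⟩
      rw [hLrep]
      match_scalars <;> field_simp
      · linear_combination -ha - hyrel
      · ring
      · linear_combination hyrel + ha
    · rw [mem_affineSpan_triple]
      refine ⟨(z*t*x)*a, (1+z)*a, ?_⟩
      rw [hMrep]
      match_scalars <;> field_simp
      · linear_combination -ha
      · linear_combination ha
    · rw [mem_affineSpan_triple]
      refine ⟨1 - (z*t*x)*a - (1+t)*(z*a), (1+t)*(z*a), ?_⟩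
      rw [hNrep]
      match_scalars <;> field_simp <;> ring
end

section
/- Let ABCD be a tetrahedron of volume 1 with K on edge CD, L on edge DA, M on edge AB, N on edge BC, ratios x = |CK|/|KD|, y = |DL|/|LA|, z = |AM|/|MB|, t = |BN|/|NC|, all positive, with xyzt ≠ 1. The four planes through (A,B,K), (B,C,L), (C,D,M), (D,A,N) enclose a tetrahedron PQRS whose volume equals |1 - xyzt|^3 / ((1+x+xy+xyz)(1+y+yz+yzt)(1+z+zt+ztx)(1+t+tx+txy)). -/
open MeasureTheory

private lemma range_three' {α : Type*} (U V W : α) : Set.range ![U, V, W] = {U, V, W} := by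
  ext p
  constructor
  · rintro ⟨i, rfl⟩; fin_cases i <;> simp
  · rintro (rfl | rfl | rfl)
    exacts [⟨0, rfl⟩, ⟨1, rfl⟩, ⟨2, rfl⟩]

private lemma mem_span3' {U V W p : EuclideanSpace ℝ (Fin 3)}
    (h : p ∈ affineSpan ℝ ({U, V, W} : Set (EuclideanSpace ℝ (Fin 3)))) :
    ∃ a b c : ℝ, a + b + c = 1 ∧ p = a • U + b • V + c • W := by
  rw [← range_three' U V W] at h
  obtain ⟨w, hw, hp⟩ := eq_affineCombination_of_mem_affineSpan_of_fintype h
  refine ⟨w 0, w 1, w 2, by simpa [Fin.sum_univ_three] using hw, ?_⟩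
  rw [hp, Finset.affineCombination_eq_linear_combination _ _ _ hw]
  simp [Fin.sum_univ_three]

private lemma seg_coeff' {C D K : EuclideanSpace ℝ (Fin 3)} (hCD : C ≠ D)
    (hK : K ∈ segment ℝ C D) (hKC : K ≠ C) (hKD : K ≠ D) {x : ℝ}
    (hxr : dist C K / dist K D = x) :
    K = (1/(1+x)) • C + (x/(1+x)) • D := by
  obtain ⟨a, b, ha, hb, hab, hKe⟩ := hK
  have ha' : a = 1 - b := by linarith
  subst ha'
  have hCK : C - K = b • (C - D) := by rw [← hKe]; module
  have hKD' : K - D = (1 - b) • (C - D) := by rw [← hKe]; module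
  have hdpos : (0:ℝ) < ‖C - D‖ := by
    rw [norm_pos_iff]; exact sub_ne_zero.mpr hCD
  have hbne : b ≠ 0 := by
    intro h; apply hKC; rw [← hKe, h]; simp
  have hane : (1 - b) ≠ 0 := by
    intro h
    apply hKD; rw [← hKe, h]
    have hb1 : b = 1 := by linarith
    simp [hb1]
  have hb0 : 0 < b := lt_of_le_of_ne hb (Ne.symm hbne)
  have ha0 : 0 < 1 - b := lt_of_le_of_ne ha (Ne.symm hane)
  have hd1 : dist C K = b * ‖C - D‖ := by
    rw [dist_eq_norm, hCK, norm_smul, Real.norm_eq_abs, abs_of_pos hb0]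
  have hd2 : dist K D = (1 - b) * ‖C - D‖ := by
    rw [dist_eq_norm, hKD', norm_smul, Real.norm_eq_abs, abs_of_pos ha0]
  have hxval : x = b / (1 - b) := by
    rw [← hxr, hd1, hd2]
    field_simp
  have h1x : 1 + x = 1 / (1 - b) := by
    rw [hxval]; field_simp; ring
  have e1 : 1 / (1 + x) = 1 - b := by rw [h1x]; field_simp
  have e2 : x / (1 + x) = b := by
    rw [h1x, hxval]; field_simp
  rw [e1, e2, ← hKe]

private lemma volume_image_add' (c : EuclideanSpace ℝ (Fin 3))
    (s : Set (EuclideanSpace ℝ (Fin 3))) :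
    volume ((fun v => v + c) '' s) = volume s := by
  have h : (fun v : EuclideanSpace ℝ (Fin 3) => v + c) '' s = (fun v => -c + v) ⁻¹' s := by
    ext w
    constructor
    · rintro ⟨v, hv, rfl⟩
      simpa [add_comm, ← add_assoc] using hv
    · intro hw
      exact ⟨-c + w, hw, by module⟩
  rw [h, measure_preimage_add]

set_option maxHeartbeats 2000000 in
theorem routh_tetrahedron_PQRS
    (A B C D M N K L P Q R S : EuclideanSpace ℝ (Fin 3)) (x y z t : ℝ)
    (hABCD : AffineIndependent ℝ ![A, B, C, D])
    (hvol : tetVol A B C D = 1)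
    (hx : 0 < x) (hy : 0 < y) (hz : 0 < z) (ht : 0 < t)
    (hxyzt : x * y * z * t ≠ 1)
    (hM : M ∈ segment ℝ A B) (hMA : M ≠ A) (hMB : M ≠ B)
    (hN : N ∈ segment ℝ B C) (hNB : N ≠ B) (hNC : N ≠ C)
    (hK : K ∈ segment ℝ C D) (hKC : K ≠ C) (hKD : K ≠ D)
    (hL : L ∈ segment ℝ D A) (hLD : L ≠ D) (hLA : L ≠ A)
    (hxr : dist C K / dist K D = x)
    (hyr : dist D L / dist L A = y)
    (hzr : dist A M / dist M B = z)
    (htr : dist B N / dist N C = t)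
    (hP : P ∈ affineSpan ℝ {A, B, K} ∧ P ∈ affineSpan ℝ {C, D, M} ∧
          P ∈ affineSpan ℝ {D, A, N})
    (hQ : Q ∈ affineSpan ℝ {A, B, K} ∧ Q ∈ affineSpan ℝ {B, C, L} ∧
          Q ∈ affineSpan ℝ {D, A, N})
    (hR : R ∈ affineSpan ℝ {A, B, K} ∧ R ∈ affineSpan ℝ {B, C, L} ∧
          R ∈ affineSpan ℝ {C, D, M})
    (hS : S ∈ affineSpan ℝ {B, C, L} ∧ S ∈ affineSpan ℝ {C, D, M} ∧
          S ∈ affineSpan ℝ {D, A, N}) :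
    tetVol P Q R S =
      |1 - x * y * z * t| ^ 3 /
        ((1 + x + x * y + x * y * z) * (1 + y + y * z + y * z * t) *
          (1 + z + z * t + z * t * x) * (1 + t + t * x + t * x * y)) := by
  simp only [tetVol] at hvol ⊢
  -- nonzero denominators
  have hxne : (1:ℝ) + x ≠ 0 := by positivity
  have hyne : (1:ℝ) + y ≠ 0 := by positivity
  have hzne : (1:ℝ) + z ≠ 0 := by positivity
  have htne : (1:ℝ) + t ≠ 0 := by positivity
  have hSp0 : (1:ℝ) + z + z*t + z*t*x ≠ 0 := by positivity
  have hSq0 : (1:ℝ) + t + t*x + t*x*y ≠ 0 := by positivity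
  have hSr0 : (1:ℝ) + x + x*y + x*y*z ≠ 0 := by positivity
  have hSs0 : (1:ℝ) + y + y*z + y*z*t ≠ 0 := by positivity
  -- distinctness of vertices
  have hABn : A ≠ B := by
    intro h
    exact absurd (hABCD.injective (show ![A,B,C,D] 0 = ![A,B,C,D] 1 by simp [h])) (by decide)
  have hBCn : B ≠ C := by
    intro h
    exact absurd (hABCD.injective (show ![A,B,C,D] 1 = ![A,B,C,D] 2 by simp [h])) (by decide)
  have hCDn : C ≠ D := by
    intro h
    exact absurd (hABCD.injective (show ![A,B,C,D] 2 = ![A,B,C,D] 3 by simp [h])) (by decide)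
  have hDAn : D ≠ A := by
    intro h
    exact absurd (hABCD.injective (show ![A,B,C,D] 3 = ![A,B,C,D] 0 by simp [h])) (by decide)
  -- parametrize the division points
  have hKe := seg_coeff' hCDn hK hKC hKD hxr
  have hLe := seg_coeff' hDAn hL hLD hLA hyr
  have hMe := seg_coeff' hABn hM hMA hMB hzr
  have hNe := seg_coeff' hBCn hN hNB hNC htr
  -- uniqueness of barycentric coordinates
  have huniq : ∀ a b c d a' b' c' d' : ℝ,
      a+b+c+d = 1 → a'+b'+c'+d' = 1 →
      a•A+b•B+c•C+d•D = a'•A+b'•B+c'•C+d'•D →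
      a=a' ∧ b=b' ∧ c=c' ∧ d=d' := by
    intro a b c d a' b' c' d' h1 h2 h3
    have h := hABCD.eq_of_sum_eq_sum (s := Finset.univ)
      (w₁ := ![a,b,c,d]) (w₂ := ![a',b',c',d'])
      (by simp [Fin.sum_univ_four, h1, h2])
      (by simpa [Fin.sum_univ_four] using h3)
    exact ⟨h 0 (Finset.mem_univ _), h 1 (Finset.mem_univ _),
      h 2 (Finset.mem_univ _), h 3 (Finset.mem_univ _)⟩
  -- coordinates of P
  obtain ⟨a1, b1, c1, h1s, h1⟩ := mem_span3' hP.1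
  obtain ⟨a2, b2, c2, h2s, h2⟩ := mem_span3' hP.2.1
  obtain ⟨a3, b3, c3, h3s, h3⟩ := mem_span3' hP.2.2
  have e1 : P = a1•A + b1•B + (c1*(1/(1+x)))•C + (c1*(x/(1+x)))•D := by
    rw [h1, hKe]; module
  have e2 : P = (c2*(1/(1+z)))•A + (c2*(z/(1+z)))•B + a2•C + b2•D := by
    rw [h2, hMe]; module
  have e3 : P = b3•A + (c3*(1/(1+t)))•B + (c3*(t/(1+t)))•C + a3•D := by
    rw [h3, hNe]; module
  have s1 : a1 + b1 + c1*(1/(1+x)) + c1*(x/(1+x)) = 1 := by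
    have : c1*(1/(1+x)) + c1*(x/(1+x)) = c1 := by field_simp
    linarith
  have s2 : c2*(1/(1+z)) + c2*(z/(1+z)) + a2 + b2 = 1 := by
    have : c2*(1/(1+z)) + c2*(z/(1+z)) = c2 := by field_simp
    linarith
  have s3 : b3 + c3*(1/(1+t)) + c3*(t/(1+t)) + a3 = 1 := by
    have : c3*(1/(1+t)) + c3*(t/(1+t)) = c3 := by field_simp
    linarith
  obtain ⟨q1, q2, -, -⟩ := huniq _ _ _ _ _ _ _ _ s1 s2 (e1.symm.trans e2)
  obtain ⟨-, r2, r3, -⟩ := huniq _ _ _ _ _ _ _ _ s1 s3 (e1.symm.trans e3)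
  have hb1v : b1 = z * a1 := by rw [q1, q2]; ring
  have hg1v : c1*(1/(1+x)) = z*t*a1 := by
    have h' : c1*(1/(1+x)) = t * b1 := by rw [r3, r2]; ring
    rw [h', hb1v]; ring
  have hd1v : c1*(x/(1+x)) = z*t*x*a1 := by
    have h' : c1*(x/(1+x)) = x * (c1*(1/(1+x))) := by ring
    rw [h', hg1v]; ring
  have ha1 : a1 = 1/(1+z+z*t+z*t*x) := by
    have h := s1
    rw [hb1v, hg1v, hd1v] at h
    rw [eq_div_iff hSp0]
    linear_combination h
  have hPc : P = (1/(1+z+z*t+z*t*x)) • A + (z/(1+z+z*t+z*t*x)) • B +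
      (z*t/(1+z+z*t+z*t*x)) • C + (z*t*x/(1+z+z*t+z*t*x)) • D := by
    rw [e1, hb1v, hg1v, hd1v, ha1]
    module
  -- coordinates of Q
  obtain ⟨a4, b4, c4, h4s, h4⟩ := mem_span3' hQ.1
  obtain ⟨a5, b5, c5, h5s, h5⟩ := mem_span3' hQ.2.1
  obtain ⟨a6, b6, c6, h6s, h6⟩ := mem_span3' hQ.2.2
  have e4 : Q = a4•A + b4•B + (c4*(1/(1+x)))•C + (c4*(x/(1+x)))•D := by
    rw [h4, hKe]; module
  have e5 : Q = (c5*(y/(1+y)))•A + a5•B + b5•C + (c5*(1/(1+y)))•D := by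
    rw [h5, hLe]; module
  have e6 : Q = b6•A + (c6*(1/(1+t)))•B + (c6*(t/(1+t)))•C + a6•D := by
    rw [h6, hNe]; module
  have s4 : a4 + b4 + c4*(1/(1+x)) + c4*(x/(1+x)) = 1 := by
    have : c4*(1/(1+x)) + c4*(x/(1+x)) = c4 := by field_simp
    linarith
  have s5 : c5*(y/(1+y)) + a5 + b5 + c5*(1/(1+y)) = 1 := by
    have : c5*(y/(1+y)) + c5*(1/(1+y)) = c5 := by field_simp; ring
    linarith
  have s6 : b6 + c6*(1/(1+t)) + c6*(t/(1+t)) + a6 = 1 := by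
    have : c6*(1/(1+t)) + c6*(t/(1+t)) = c6 := by field_simp
    linarith
  obtain ⟨m1, -, -, m4⟩ := huniq _ _ _ _ _ _ _ _ s4 s5 (e4.symm.trans e5)
  obtain ⟨-, n2, n3, -⟩ := huniq _ _ _ _ _ _ _ _ s4 s6 (e4.symm.trans e6)
  have hgq : c4*(1/(1+x)) = t*b4 := by rw [n3, n2]; ring
  have hdq : c4*(x/(1+x)) = t*x*b4 := by
    have h' : c4*(x/(1+x)) = x*(c4*(1/(1+x))) := by ring
    rw [h', hgq]; ring
  have haq : a4 = x*y*t*b4 := by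
    have h' : a4 = y*(c5*(1/(1+y))) := by rw [m1]; ring
    rw [h', ← m4, hdq]; ring
  have hb4 : b4 = 1/(1+t+t*x+t*x*y) := by
    have h := s4
    rw [haq, hgq, hdq] at h
    rw [eq_div_iff hSq0]
    linear_combination h
  have hQc : Q = (x*y*t/(1+t+t*x+t*x*y)) • A + (1/(1+t+t*x+t*x*y)) • B +
      (t/(1+t+t*x+t*x*y)) • C + (t*x/(1+t+t*x+t*x*y)) • D := by
    rw [e4, haq, hgq, hdq, hb4]
    module
  -- coordinates of R
  obtain ⟨a7, b7, c7, h7s, h7⟩ := mem_span3' hR.1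
  obtain ⟨a8, b8, c8, h8s, h8⟩ := mem_span3' hR.2.1
  obtain ⟨a9, b9, c9, h9s, h9⟩ := mem_span3' hR.2.2
  have e7 : R = a7•A + b7•B + (c7*(1/(1+x)))•C + (c7*(x/(1+x)))•D := by
    rw [h7, hKe]; module
  have e8 : R = (c8*(y/(1+y)))•A + a8•B + b8•C + (c8*(1/(1+y)))•D := by
    rw [h8, hLe]; module
  have e9 : R = (c9*(1/(1+z)))•A + (c9*(z/(1+z)))•B + a9•C + b9•D := by
    rw [h9, hMe]; module
  have s7 : a7 + b7 + c7*(1/(1+x)) + c7*(x/(1+x)) = 1 := by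
    have : c7*(1/(1+x)) + c7*(x/(1+x)) = c7 := by field_simp
    linarith
  have s8 : c8*(y/(1+y)) + a8 + b8 + c8*(1/(1+y)) = 1 := by
    have : c8*(y/(1+y)) + c8*(1/(1+y)) = c8 := by field_simp; ring
    linarith
  have s9 : c9*(1/(1+z)) + c9*(z/(1+z)) + a9 + b9 = 1 := by
    have : c9*(1/(1+z)) + c9*(z/(1+z)) = c9 := by field_simp
    linarith
  obtain ⟨m1', -, -, m4'⟩ := huniq _ _ _ _ _ _ _ _ s7 s8 (e7.symm.trans e8)
  obtain ⟨n1', n2', -, -⟩ := huniq _ _ _ _ _ _ _ _ s7 s9 (e7.symm.trans e9)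
  have har : a7 = x*y*(c7*(1/(1+x))) := by
    have h' : a7 = y*(c8*(1/(1+y))) := by rw [m1']; ring
    rw [h', ← m4']; ring
  have hbr : b7 = x*y*z*(c7*(1/(1+x))) := by
    have h' : b7 = z*(c9*(1/(1+z))) := by rw [n2']; ring
    rw [h', ← n1', har]; ring
  have hdr : c7*(x/(1+x)) = x*(c7*(1/(1+x))) := by ring
  have hg7 : c7*(1/(1+x)) = 1/(1+x+x*y+x*y*z) := by
    have h := s7
    rw [har, hbr, hdr] at h
    rw [eq_div_iff hSr0]
    linear_combination h
  have hRc : R = (x*y/(1+x+x*y+x*y*z)) • A + (x*y*z/(1+x+x*y+x*y*z)) • B +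
      (1/(1+x+x*y+x*y*z)) • C + (x/(1+x+x*y+x*y*z)) • D := by
    rw [e7, har, hbr, hdr, hg7]
    module
  -- coordinates of S
  obtain ⟨a10, b10, c10, h10s, h10⟩ := mem_span3' hS.1
  obtain ⟨a11, b11, c11, h11s, h11⟩ := mem_span3' hS.2.1
  obtain ⟨a12, b12, c12, h12s, h12⟩ := mem_span3' hS.2.2
  have e10 : S = (c10*(y/(1+y)))•A + a10•B + b10•C + (c10*(1/(1+y)))•D := by
    rw [h10, hLe]; module
  have e11 : S = (c11*(1/(1+z)))•A + (c11*(z/(1+z)))•B + a11•C + b11•D := by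
    rw [h11, hMe]; module
  have e12 : S = b12•A + (c12*(1/(1+t)))•B + (c12*(t/(1+t)))•C + a12•D := by
    rw [h12, hNe]; module
  have s10 : c10*(y/(1+y)) + a10 + b10 + c10*(1/(1+y)) = 1 := by
    have : c10*(y/(1+y)) + c10*(1/(1+y)) = c10 := by field_simp; ring
    linarith
  have s11 : c11*(1/(1+z)) + c11*(z/(1+z)) + a11 + b11 = 1 := by
    have : c11*(1/(1+z)) + c11*(z/(1+z)) = c11 := by field_simp
    linarith
  have s12 : b12 + c12*(1/(1+t)) + c12*(t/(1+t)) + a12 = 1 := by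
    have : c12*(1/(1+t)) + c12*(t/(1+t)) = c12 := by field_simp
    linarith
  obtain ⟨m1s, m2s, -, -⟩ := huniq _ _ _ _ _ _ _ _ s10 s11 (e10.symm.trans e11)
  obtain ⟨-, n2s, n3s, -⟩ := huniq _ _ _ _ _ _ _ _ s10 s12 (e10.symm.trans e12)
  have has : c10*(y/(1+y)) = y*(c10*(1/(1+y))) := by ring
  have hbs : a10 = y*z*(c10*(1/(1+y))) := by
    have h' : a10 = z*(c11*(1/(1+z))) := by rw [m2s]; ring
    rw [h', ← m1s, has]; ring
  have hcs : b10 = y*z*t*(c10*(1/(1+y))) := by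
    have h' : b10 = t*(c12*(1/(1+t))) := by rw [n3s]; ring
    rw [h', ← n2s, hbs]; ring
  have hd10 : c10*(1/(1+y)) = 1/(1+y+y*z+y*z*t) := by
    have h := s10
    rw [has, hbs, hcs] at h
    rw [eq_div_iff hSs0]
    linear_combination h
  have hSc : S = (y/(1+y+y*z+y*z*t)) • A + (y*z/(1+y+y*z+y*z*t)) • B +
      (y*z*t/(1+y+y*z+y*z*t)) • C + (1/(1+y+y*z+y*z*t)) • D := by
    rw [e10, has, hbs, hcs, hd10]
    module
  -- linear independence of edge vectors
  have hli : LinearIndependent ℝ ![B - A, C - A, D - A] := by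
    rw [Fintype.linearIndependent_iff]
    intro g hg
    have hg' : g 0 • (B - A) + g 1 • (C - A) + g 2 • (D - A) = 0 := by
      simpa [Fin.sum_univ_three] using hg
    have key := affineIndependent_iff.mp hABCD Finset.univ
      ![-(g 0 + g 1 + g 2), g 0, g 1, g 2]
      (by simp [Fin.sum_univ_four]; ring)
      (by
        have h2 : (-(g 0 + g 1 + g 2)) • A + g 0 • B + g 1 • C + g 2 • D =
            g 0 • (B - A) + g 1 • (C - A) + g 2 • (D - A) := by module
        simp only [Fin.sum_univ_four]
        simp only [Matrix.cons_val_zero, Matrix.cons_val_one, Matrix.head_cons,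
          Matrix.cons_val_two, Matrix.tail_cons, Matrix.cons_val_three]
        rw [h2, hg'])
    intro i
    fin_cases i
    · simpa using key 1 (Finset.mem_univ _)
    · simpa using key 2 (Finset.mem_univ _)
    · simpa using key 3 (Finset.mem_univ _)
  have hcard : Fintype.card (Fin 3) = Module.finrank ℝ (EuclideanSpace ℝ (Fin 3)) := by
    simp [finrank_euclideanSpace_fin]
  let b : Module.Basis (Fin 3) ℝ (EuclideanSpace ℝ (Fin 3)) :=
    basisOfLinearIndependentOfCardEqFinrank hli hcard
  have hb : ⇑b = ![B - A, C - A, D - A] :=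
    coe_basisOfLinearIndependentOfCardEqFinrank hli hcard
  let g : EuclideanSpace ℝ (Fin 3) →ₗ[ℝ] EuclideanSpace ℝ (Fin 3) :=
    b.constr ℝ ![Q - P, R - P, S - P]
  have hgb : ∀ i, g (b i) = ![Q - P, R - P, S - P] i := fun i => b.constr_basis ℝ _ i
  have hb0 : b 0 = B - A := by rw [show b 0 = ⇑b 0 from rfl, hb]; rfl
  have hb1 : b 1 = C - A := by rw [show b 1 = ⇑b 1 from rfl, hb]; rfl
  have hb2 : b 2 = D - A := by rw [show b 2 = ⇑b 2 from rfl, hb]; rfl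
  have hgv1 : g (B - A) = Q - P := by rw [← hb0]; simpa using hgb 0
  have hgv2 : g (C - A) = R - P := by rw [← hb1]; simpa using hgb 1
  have hgv3 : g (D - A) = S - P := by rw [← hb2]; simpa using hgb 2
  -- the affine map
  let f : EuclideanSpace ℝ (Fin 3) →ᵃ[ℝ] EuclideanSpace ℝ (Fin 3) :=
    AffineMap.mk' (fun p => g (p - A) + P) g A
      (fun p' => by simp [vsub_eq_sub, vadd_eq_add])
  have hfA : f A = P := by
    show g (A - A) + P = P
    simp
  have hfB : f B = Q := by
    show g (B - A) + P = Q
    rw [hgv1]; module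
  have hfC : f C = R := by
    show g (C - A) + P = R
    rw [hgv2]; module
  have hfD : f D = S := by
    show g (D - A) + P = S
    rw [hgv3]; module
  -- image of the convex hull
  have himg : convexHull ℝ ({P, Q, R, S} : Set (EuclideanSpace ℝ (Fin 3))) =
      f '' convexHull ℝ ({A, B, C, D} : Set (EuclideanSpace ℝ (Fin 3))) := by
    rw [AffineMap.image_convexHull]
    congr 1
    rw [Set.image_insert_eq, Set.image_insert_eq, Set.image_insert_eq,
      Set.image_singleton, hfA, hfB, hfC, hfD]
  -- measure of the image
  have hmeas : volume (f '' convexHull ℝ ({A, B, C, D} : Set (EuclideanSpace ℝ (Fin 3)))) =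
      ENNReal.ofReal |LinearMap.det g| * volume (convexHull ℝ ({A, B, C, D} : Set (EuclideanSpace ℝ (Fin 3)))) := by
    have hdecomp : f '' convexHull ℝ ({A, B, C, D} : Set (EuclideanSpace ℝ (Fin 3))) =
        (fun v => v + P) '' (g '' ((fun v => v + (-A)) '' (convexHull ℝ ({A, B, C, D} : Set (EuclideanSpace ℝ (Fin 3)))))) := by
      rw [Set.image_image, Set.image_image]
      apply Set.image_congr'
      intro v
      show g (v + -A) + P = f v
      simp [f, sub_eq_add_neg]
    rw [hdecomp, volume_image_add', MeasureTheory.Measure.addHaar_image_linearMap,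
      volume_image_add']
  -- inverse atoms
  set p : ℝ := 1/(1+z+z*t+z*t*x) with hpdef
  set q : ℝ := 1/(1+t+t*x+t*x*y) with hqdef
  set r : ℝ := 1/(1+x+x*y+x*y*z) with hrdef
  set s : ℝ := 1/(1+y+y*z+y*z*t) with hsdef
  have hp : (1+z+z*t+z*t*x) * p = 1 := by rw [hpdef]; field_simp
  have hq : (1+t+t*x+t*x*y) * q = 1 := by rw [hqdef]; field_simp
  have hr : (1+x+x*y+x*y*z) * r = 1 := by rw [hrdef]; field_simp
  have hs : (1+y+y*z+y*z*t) * s = 1 := by rw [hsdef]; field_simp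
  have hPc' : P = p•A + (z*p)•B + (z*t*p)•C + (z*t*x*p)•D := by
    rw [hPc, hpdef]; match_scalars <;> ring
  have hQc' : Q = (x*y*t*q)•A + q•B + (t*q)•C + (t*x*q)•D := by
    rw [hQc, hqdef]; match_scalars <;> ring
  have hRc' : R = (x*y*r)•A + (x*y*z*r)•B + r•C + (x*r)•D := by
    rw [hRc, hrdef]; match_scalars <;> ring
  have hSc' : S = (y*s)•A + (y*z*s)•B + (y*z*t*s)•C + s•D := by
    rw [hSc, hsdef]; match_scalars <;> ring
  -- coordinates of the images in the basis
  have hrepr : ∀ (w : (EuclideanSpace ℝ (Fin 3))) (c1 c2 c3 : ℝ), w = c1 • b 0 + c2 • b 1 + c3 • b 2 →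
      b.repr w 0 = c1 ∧ b.repr w 1 = c2 ∧ b.repr w 2 = c3 := by
    intro w c1 c2 c3 hw
    subst hw
    refine ⟨?_, ?_, ?_⟩ <;>
      simp [map_add, _root_.map_smul, Module.Basis.repr_self, Finsupp.single_apply]
  have hQP : Q - P = (q - z*p) • b 0 + (t*q - z*t*p) • b 1 + (t*x*q - z*t*x*p) • b 2 := by
    rw [hb0, hb1, hb2, hQc', hPc']
    match_scalars <;> first | ring1 | linear_combination hq - hp
  have hRP : R - P = (x*y*z*r - z*p) • b 0 + (r - z*t*p) • b 1 + (x*r - z*t*x*p) • b 2 := by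
    rw [hb0, hb1, hb2, hRc', hPc']
    match_scalars <;> first | ring1 | linear_combination hr - hp
  have hSP : S - P = (y*z*s - z*p) • b 0 + (y*z*t*s - z*t*p) • b 1 + (s - z*t*x*p) • b 2 := by
    rw [hb0, hb1, hb2, hSc', hPc']
    match_scalars <;> first | ring1 | linear_combination hs - hp
  obtain ⟨eq1, eq2, eq3⟩ := hrepr _ _ _ _ hQP
  obtain ⟨er1, er2, er3⟩ := hrepr _ _ _ _ hRP
  obtain ⟨es1, es2, es3⟩ := hrepr _ _ _ _ hSP
  have hgb0 : g (b 0) = Q - P := by simpa using hgb 0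
  have hgb1 : g (b 1) = R - P := by simpa using hgb 1
  have hgb2 : g (b 2) = S - P := by simpa using hgb 2
  have hmat : LinearMap.toMatrix b b g = Matrix.of
      ![![q - z*p, x*y*z*r - z*p, y*z*s - z*p],
        ![t*q - z*t*p, r - z*t*p, y*z*t*s - z*t*p],
        ![t*x*q - z*t*x*p, x*r - z*t*x*p, s - z*t*x*p]] := by
    ext i j
    rw [LinearMap.toMatrix_apply]
    fin_cases j
    · fin_cases i
      · simpa [hgb] using eq1
      · simpa [hgb] using eq2
      · simpa [hgb] using eq3
    · fin_cases i
      · simpa [hgb] using er1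
      · simpa [hgb] using er2
      · simpa [hgb] using er3
    · fin_cases i
      · simpa [hgb] using es1
      · simpa [hgb] using es2
      · simpa [hgb] using es3
  have hdetg : LinearMap.det g = (1 - x*y*z*t)^3 * (p*(q*(r*s))) := by
    rw [← LinearMap.det_toMatrix b g, hmat, Matrix.det_fin_three]
    simp only [Matrix.of_apply, Matrix.cons_val', Matrix.cons_val_zero, Matrix.empty_val',
      Matrix.cons_val_fin_one, Matrix.cons_val_one, Matrix.head_cons, Matrix.head_fin_const,
      Matrix.cons_val_two, Matrix.tail_cons, Matrix.head_val']
    linear_combination (r*s*(1-x*y*z*t)^2*(-q))*hp + (r*s*(1-x*y*z*t)^2*z*p)*hq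
  have hprod : p*(q*(r*s)) = 1/((1 + x + x * y + x * y * z) * (1 + y + y * z + y * z * t) *
      (1 + z + z * t + z * t * x) * (1 + t + t * x + t * x * y)) := by
    rw [hpdef, hqdef, hrdef, hsdef]
    field_simp
  rw [himg, hmeas, ENNReal.toReal_mul, ENNReal.toReal_ofReal (abs_nonneg _), hvol, mul_one,
    hdetg, hprod, abs_mul, abs_pow,
    abs_of_pos (show (0:ℝ) < 1/((1 + x + x * y + x * y * z) * (1 + y + y * z + y * z * t) *
      (1 + z + z * t + z * t * x) * (1 + t + t * x + t * x * y)) by positivity), mul_one_div]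
end

section
/- Let ABCD be a tetrahedron of volume 1 with M on AB, N on BC, K on CD dividing in ratios z = |AM|/|MB|, t = |BN|/|NC|, x = |CK|/|KD|. Let F be the intersection of segments AN and CM in the face (triangle) ABC, and let P be the intersection of segments DF and MK inside the tetrahedron. Then Vol(APKD) = z/((1+x)(1+z+zt+ztx)). -/
open MeasureTheory Pointwise

/-- Parametrize a point on a segment by the ratio of distances. -/
lemma seg_param {X Y Mp : EuclideanSpace ℝ (Fin 3)} {r : ℝ} (hr0 : 0 < r) (hXY : X ≠ Y)
    (h : Mp ∈ segment ℝ X Y) (hne2 : Mp ≠ Y)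
    (hr : dist X Mp / dist Mp Y = r) : Mp - X = (r / (1 + r)) • (Y - X) := by
  obtain ⟨a, b, ha, hb, hab, hM⟩ := h
  have hMX : Mp - X = b • (Y - X) := by
    rw [← hM]; have : a = 1 - b := by linarith
    rw [this]; module
  have hMY : Mp - Y = (-a) • (Y - X) := by
    rw [← hM]; have : b = 1 - a := by linarith
    rw [this]; module
  have hYX : Y - X ≠ 0 := sub_ne_zero.mpr (Ne.symm hXY)
  have hnYX : 0 < ‖Y - X‖ := norm_pos_iff.mpr hYX
  have ha0 : a ≠ 0 := by
    intro h0
    apply hne2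
    have : Mp - Y = 0 := by rw [hMY, h0]; simp
    exact sub_eq_zero.mp this
  have hd1 : dist X Mp = b * ‖Y - X‖ := by
    rw [dist_eq_norm, ← neg_sub, norm_neg, hMX, norm_smul, Real.norm_of_nonneg hb]
  have hd2 : dist Mp Y = a * ‖Y - X‖ := by
    rw [dist_eq_norm, hMY, norm_smul]
    simp [abs_of_nonneg ha]
  rw [hd1, hd2] at hr
  have ha' : 0 < a := lt_of_le_of_ne ha (Ne.symm ha0)
  have hba : b = r * a := by
    field_simp at hr
    nlinarith [hr]
  have hb' : b = r / (1 + r) := by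
    rw [hba] at hab ⊢
    have : a = 1 / (1+r) := by field_simp; linarith
    rw [this]; field_simp
  rw [hMX, hb']

/-- Linear independence of edge vectors from affine independence. -/
lemma li_of_affine {A B C D : EuclideanSpace ℝ (Fin 3)}
    (h : AffineIndependent ℝ ![A, B, C, D]) :
    LinearIndependent ℝ ![B - A, C - A, D - A] := by
  rw [affineIndependent_iff] at h
  rw [Fintype.linearIndependent_iff]
  intro g hg
  have := h Finset.univ ![-(g 0 + g 1 + g 2), g 0, g 1, g 2] (by simp [Fin.sum_univ_four]; ring)
    (by
      simp [Fin.sum_univ_four]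
      rw [Fin.sum_univ_three] at hg
      simp at hg
      linear_combination (norm := module) hg)
  intro i
  fin_cases i
  · exact this 1 (by simp)
  · exact this 2 (by simp)
  · exact this 3 (by simp)

/-- Extract coefficients using linear independence. -/
lemma coeff_eq {u v w : EuclideanSpace ℝ (Fin 3)} (hli : LinearIndependent ℝ ![u, v, w])
    {a b c d e f : ℝ} (h : a • u + b • v + c • w = d • u + e • v + f • w) :
    a = d ∧ b = e ∧ c = f := by
  have key := Fintype.linearIndependent_iff.mp hli ![a - d, b - e, c - f]
    (by
      rw [Fin.sum_univ_three]
      simp only [Matrix.cons_val_zero, Matrix.cons_val_one, Matrix.head_cons,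
        Matrix.cons_val_two, Matrix.tail_cons]
      linear_combination (norm := module) h)
  refine ⟨?_, ?_, ?_⟩
  · have := key 0; simp at this; linarith
  · have := key 1; simp at this; linarith
  · have := key 2; simp at this; linarith

lemma exists_linmap {u v w u' v' : EuclideanSpace ℝ (Fin 3)} (hli : LinearIndependent ℝ ![u, v, w])
    {p1 p2 p3 k2 k3 : ℝ} (hu' : u' = p1 • u + p2 • v + p3 • w) (hv' : v' = k2 • v + k3 • w) :
    ∃ L : EuclideanSpace ℝ (Fin 3) →ₗ[ℝ] EuclideanSpace ℝ (Fin 3),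
      L u = u' ∧ L v = v' ∧ L w = w ∧ LinearMap.det L = p1 * k2 := by
  have hcard : Fintype.card (Fin 3) = Module.finrank ℝ (EuclideanSpace ℝ (Fin 3)) := by simp
  let b := basisOfLinearIndependentOfCardEqFinrank hli hcard
  have hb0 : b 0 = u := by simp [b, coe_basisOfLinearIndependentOfCardEqFinrank]
  have hb1 : b 1 = v := by simp [b, coe_basisOfLinearIndependentOfCardEqFinrank]
  have hb2 : b 2 = w := by simp [b, coe_basisOfLinearIndependentOfCardEqFinrank]
  let Mm : Matrix (Fin 3) (Fin 3) ℝ := !![p1, 0, 0; p2, k2, 0; p3, k3, 1]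
  refine ⟨Matrix.toLin b b Mm, ?_, ?_, ?_, ?_⟩
  · rw [← hb0, Matrix.toLin_self, Fin.sum_univ_three, hb0, hb1, hb2, hu']
    simp [Mm]
  · rw [← hb1, Matrix.toLin_self, Fin.sum_univ_three, hb0, hb1, hb2, hv']
    simp [Mm]
  · rw [← hb2, Matrix.toLin_self, Fin.sum_univ_three, hb0, hb1, hb2]
    simp [Mm]
  · rw [LinearMap.det_toLin, Matrix.det_fin_three]
    simp [Mm]

lemma vol_image (A : EuclideanSpace ℝ (Fin 3))
    (L : EuclideanSpace ℝ (Fin 3) →ₗ[ℝ] EuclideanSpace ℝ (Fin 3))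
    (s : Set (EuclideanSpace ℝ (Fin 3))) :
    volume ((fun y => A + L (y - A)) '' s) = ENNReal.ofReal |LinearMap.det L| * volume s := by
  have h1 : (fun y => A + L (y - A)) '' s = (A - L A) +ᵥ (L '' s) := by
    ext p
    simp only [Set.mem_vadd_set, Set.mem_image]
    constructor
    · rintro ⟨y, hy, rfl⟩
      exact ⟨L y, ⟨y, hy, rfl⟩, by simp [map_sub]; abel⟩
    · rintro ⟨q, ⟨y, hy, rfl⟩, rfl⟩
      exact ⟨y, hy, by simp [map_sub, vadd_eq_add]; abel⟩
  rw [h1, measure_vadd, Measure.addHaar_image_linearMap]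

set_option maxHeartbeats 1000000 in
theorem vol_APKD
    (A B C D M N K F P : EuclideanSpace ℝ (Fin 3)) (x z t : ℝ)
    (hABCD : AffineIndependent ℝ ![A, B, C, D])
    (hvol : tetVol A B C D = 1)
    (hx : 0 < x) (hz : 0 < z) (ht : 0 < t)
    (hM : M ∈ segment ℝ A B) (hMA : M ≠ A) (hMB : M ≠ B)
    (hN : N ∈ segment ℝ B C) (hNB : N ≠ B) (hNC : N ≠ C)
    (hK : K ∈ segment ℝ C D) (hKC : K ≠ C) (hKD : K ≠ D)
    (hzr : dist A M / dist M B = z)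
    (htr : dist B N / dist N C = t)
    (hxr : dist C K / dist K D = x)
    (hF1 : F ∈ segment ℝ A N) (hF2 : F ∈ segment ℝ C M)
    (hP1 : P ∈ segment ℝ D F) (hP2 : P ∈ segment ℝ M K) :
    tetVol A P K D = z / ((1 + x) * (1 + z + z * t + z * t * x)) := by
  have h1z : (1:ℝ) + z ≠ 0 := by positivity
  have h1t : (1:ℝ) + t ≠ 0 := by positivity
  have h1x : (1:ℝ) + x ≠ 0 := by positivity
  -- distinctness of vertices
  have hAB : A ≠ B := by
    have := hABCD.injective.ne (show (0:Fin 4) ≠ 1 by decide); simpa using this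
  have hBC : B ≠ C := by
    have := hABCD.injective.ne (show (1:Fin 4) ≠ 2 by decide); simpa using this
  have hCD : C ≠ D := by
    have := hABCD.injective.ne (show (2:Fin 4) ≠ 3 by decide); simpa using this
  -- edge vectors
  set u := B - A with hu
  set v := C - A with hv
  set w := D - A with hw
  have hli : LinearIndependent ℝ ![u, v, w] := li_of_affine hABCD
  -- parametrizations
  have vM : M - A = (z / (1 + z)) • u := seg_param hz hAB hM hMB hzr
  have vNB : N - B = (t / (1 + t)) • (C - B) := seg_param ht hBC hN hNC htr
  have vKC : K - C = (x / (1 + x)) • (D - C) := seg_param hx hCD hK hKD hxr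
  have vN : N - A = (1 - t / (1 + t)) • u + (t / (1 + t)) • v := by
    rw [hu, hv]; linear_combination (norm := module) vNB
  have vK : K - A = (1 - x / (1 + x)) • v + (x / (1 + x)) • w := by
    rw [hv, hw]; linear_combination (norm := module) vKC
  -- F on AN and CM
  obtain ⟨a1, s, _, hs0, hsum1, hF1'⟩ := hF1
  have vFa : F - A = s • (N - A) := by
    rw [← hF1']; have : a1 = 1 - s := by linarith
    rw [this]; module
  obtain ⟨a2, r, _, hr0, hsum2, hF2'⟩ := hF2
  have vFb : F - A = (1 - r) • v + r • (M - A) := by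
    rw [← hF2', hv]; have : a2 = 1 - r := by linarith
    rw [this]; module
  -- P on DF and MK
  obtain ⟨a3, q, _, hq0, hsum3, hP1'⟩ := hP1
  have vPa : P - A = (1 - q) • w + q • (F - A) := by
    rw [← hP1', hw]; have : a3 = 1 - q := by linarith
    rw [this]; module
  obtain ⟨a4, m, _, hm0, hsum4, hP2'⟩ := hP2
  have vPb : P - A = (1 - m) • (M - A) + m • (K - A) := by
    rw [← hP2']; have : a4 = 1 - m := by linarith
    rw [this]; module
  -- coefficient equations for F
  have hFco : (s * (1 - t / (1 + t))) • u + (s * (t / (1 + t))) • v + (0:ℝ) • w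
      = (r * (z / (1 + z))) • u + (1 - r) • v + (0:ℝ) • w := by
    have h := vFa.symm.trans vFb
    rw [vN, vM] at h
    linear_combination (norm := module) h
  obtain ⟨E1, E2, -⟩ := coeff_eq hli hFco
  -- coefficient equations for P
  have hPco : (q * (s * (1 - t / (1 + t)))) • u + (q * (s * (t / (1 + t)))) • v + (1 - q) • w
      = ((1 - m) * (z / (1 + z))) • u + (m * (1 - x / (1 + x))) • v + (m * (x / (1 + x))) • w := by
    have h := vPa.symm.trans vPb
    rw [vFa, vN, vM, vK] at h
    linear_combination (norm := module) h
  obtain ⟨E3, E4, E5⟩ := coeff_eq hli hPco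
  -- clear denominators
  have e1 : s * (1 + z) = r * z * (1 + t) := by
    have h := congrArg (· * ((1 + t) * (1 + z))) E1
    field_simp at h
    apply mul_right_cancel₀ (show ((1 + t) * (1 + z) : ℝ) ≠ 0 from mul_ne_zero h1t h1z)
    linear_combination ((1 + t) * (1 + z)) * h
  have e2 : s * t = (1 - r) * (1 + t) := by
    have h := congrArg (· * (1 + t)) E2
    field_simp at h
    linear_combination h
  have e4 : q * s * t * (1 + x) = m * (1 + t) := by
    have h := congrArg (· * ((1 + t) * (1 + x))) E4
    field_simp at h
    apply mul_right_cancel₀ (show ((1 + t) * (1 + x) : ℝ) ≠ 0 from mul_ne_zero h1t h1x)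
    linear_combination ((1 + t) * (1 + x)) * h
  have e5 : (1 - q) * (1 + x) = m * x := by
    have h := congrArg (· * (1 + x)) E5
    field_simp at h
    linear_combination h
  have hA : s * (1 + z + z * t) = z * (1 + t) := by linear_combination e1 + z * e2
  have hB' : q * s * t * x * (1 + x) = (1 - q) * (1 + x) * (1 + t) := by
    linear_combination x * e4 - (1 + t) * e5
  have hBq : q * (s * t * x + 1 + t) = 1 + t :=
    mul_right_cancel₀ h1x (by linear_combination hB')
  have hT : q * s * (1 + z + z * t + z * t * x) = z * (1 + t) := by
    linear_combination q * hA + z * hBq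
  -- the key determinant value
  have hS : (0:ℝ) < 1 + z + z * t + z * t * x := by positivity
  have hzt : (0:ℝ) < z * (1 + t) := by positivity
  have hspos : 0 < s := by
    rcases lt_or_eq_of_le hs0 with h | h
    · exact h
    · exfalso
      rw [← h, zero_mul] at hA
      linarith
  have hqpos : 0 < q := by
    rcases lt_or_eq_of_le hq0 with h | h
    · exact h
    · exfalso
      rw [← h, zero_mul, zero_mul] at hT
      linarith
  have hdetval : (q * (s * (1 - t / (1 + t)))) * (1 - x / (1 + x))
      = z / ((1 + x) * (1 + z + z * t + z * t * x)) := by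
    field_simp
    ring_nf
    ring_nf at hT
    linear_combination hT
  -- representation of P - A and K - A
  have hPrep : P - A = (q * (s * (1 - t / (1 + t)))) • u + (q * (s * (t / (1 + t)))) • v
      + (1 - q) • w := by
    rw [vPa, vFa, vN]; module
  have hKrep : K - A = (1 - x / (1 + x)) • v + (x / (1 + x)) • w := vK
  obtain ⟨L, hLu, hLv, hLw, hLdet⟩ := exists_linmap hli hPrep hKrep
  -- affine map
  let T : EuclideanSpace ℝ (Fin 3) →ᵃ[ℝ] EuclideanSpace ℝ (Fin 3) :=
    { toFun := fun y => A + L (y - A)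
      linear := L
      map_vadd' := by
        intro p v'
        simp only [vadd_eq_add, map_sub, map_add]
        abel }
  have hTA : T A = A := by simp [T]
  have hTB : T B = P := by
    show A + L (B - A) = P
    rw [← hu, hLu]; abel
  have hTC : T C = K := by
    show A + L (C - A) = K
    rw [← hv, hLv]; abel
  have hTD : T D = D := by
    show A + L (D - A) = D
    rw [← hw, hLw, hw]; abel
  have himg : (fun y => A + L (y - A)) '' (convexHull ℝ {A, B, C, D})
      = convexHull ℝ {A, P, K, D} := by
    have h := T.image_convexHull ({A, B, C, D} : Set (EuclideanSpace ℝ (Fin 3)))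
    have himg2 : ⇑T '' ({A, B, C, D} : Set (EuclideanSpace ℝ (Fin 3))) = {A, P, K, D} := by
      simp only [Set.image_insert_eq, Set.image_singleton, hTA, hTB, hTC, hTD]
    rw [himg2] at h
    exact h
  have hvol1 : volume (convexHull ℝ ({A, B, C, D} : Set (EuclideanSpace ℝ (Fin 3)))) = 1 := by
    have := hvol
    unfold tetVol at this
    exact (ENNReal.toReal_eq_one_iff _).mp this
  have hdetpos : 0 < LinearMap.det L := by
    rw [hLdet]
    have h2 : (0:ℝ) < 1 - t / (1 + t) := by
      rw [sub_pos]; rw [div_lt_one (by positivity)]; linarith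
    have h3 : (0:ℝ) < 1 - x / (1 + x) := by
      rw [sub_pos]; rw [div_lt_one (by positivity)]; linarith
    positivity
  calc tetVol A P K D
      = (volume (convexHull ℝ ({A, P, K, D} : Set (EuclideanSpace ℝ (Fin 3))))).toReal := rfl
    _ = (volume ((fun y => A + L (y - A)) '' (convexHull ℝ {A, B, C, D}))).toReal := by
        rw [himg]
    _ = (ENNReal.ofReal |LinearMap.det L| * volume (convexHull ℝ {A, B, C, D})).toReal := by
        rw [vol_image]
    _ = |LinearMap.det L| := by
        rw [hvol1, mul_one, ENNReal.toReal_ofReal (abs_nonneg _)]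
    _ = LinearMap.det L := abs_of_pos hdetpos
    _ = z / ((1 + x) * (1 + z + z * t + z * t * x)) := by
        rw [hLdet, ← hdetval]
end

section
/- Let ABCD be a tetrahedron of volume 1 with interior edge points K on CD, L on DA, M on AB, N on BC and ratios x = |CK|/|KD|, y = |DL|/|LA|, z = |AM|/|MB|, t = |BN|/|NC|. Then Vol(KLMN) + Vol(AKLM) + Vol(BLMN) + Vol(CKMN) + Vol(DKLN) + Vol(ACKM) + Vol(BDLN) = 1, provided xyzt < 1. -/
open MeasureTheory Pointwise
set_option maxHeartbeats 1000000

lemma abs_eq_of_eq_of_nonneg {X v : ℝ} (h : X = v) (hv : 0 ≤ v) : |X| = v := by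
  subst h; exact abs_of_nonneg hv

lemma abs_eq_of_eq_neg_of_nonneg {X v : ℝ} (h : X = -v) (hv : 0 ≤ v) : |X| = v := by
  subst h; rw [abs_neg]; exact abs_of_nonneg hv

lemma tetVol_affineMap (f : EuclideanSpace ℝ (Fin 3) →ᵃ[ℝ] EuclideanSpace ℝ (Fin 3))
    (P Q R S : EuclideanSpace ℝ (Fin 3)) :
    tetVol (f P) (f Q) (f R) (f S) = |LinearMap.det f.linear| * tetVol P Q R S := by
  unfold tetVol
  have h1 : ({f P, f Q, f R, f S} : Set (EuclideanSpace ℝ (Fin 3))) = f '' {P, Q, R, S} := by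
    simp [Set.image_insert_eq]
  have hfx : ∀ v, f v = f 0 +ᵥ f.linear v := fun v => by
    conv_lhs => rw [AffineMap.decomp f]
    simp [add_comm]
  have h2 : (⇑f '' convexHull ℝ {P, Q, R, S})
      = (f 0) +ᵥ (⇑f.linear '' convexHull ℝ {P, Q, R, S}) := by
    rw [← Set.image_vadd, Set.image_image]
    exact Set.image_congr' hfx
  rw [h1, ← AffineMap.image_convexHull, h2, measure_vadd,
    Measure.addHaar_image_linearMap, ENNReal.toReal_mul, ENNReal.toReal_ofReal (abs_nonneg _)]

lemma tetVol_combo (A B C D P Q R S : EuclideanSpace ℝ (Fin 3))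
    (hABCD : AffineIndependent ℝ ![A, B, C, D]) (p q r s : Fin 3 → ℝ)
    (hP : P = A + (p 0 • (B - A) + p 1 • (C - A) + p 2 • (D - A)))
    (hQ : Q = A + (q 0 • (B - A) + q 1 • (C - A) + q 2 • (D - A)))
    (hR : R = A + (r 0 • (B - A) + r 1 • (C - A) + r 2 • (D - A)))
    (hS : S = A + (s 0 • (B - A) + s 1 • (C - A) + s 2 • (D - A))) :
    tetVol P Q R S =
      |(Matrix.of fun i j => (![q, r, s] j) i - p i).det| * tetVol A B C D := by
  set e : Fin 3 → EuclideanSpace ℝ (Fin 3) := ![B - A, C - A, D - A] with he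
  have hli0 := (affineIndependent_iff_linearIndependent_vsub ℝ ![A, B, C, D] 0).mp hABCD
  have hinj : Function.Injective (fun i : Fin 3 => (⟨i.succ, Fin.succ_ne_zero i⟩ :
      {x : Fin 4 // x ≠ 0})) := by
    intro i j hij
    simpa [Fin.succ_inj] using hij
  have hli : LinearIndependent ℝ e := by
    have := hli0.comp _ hinj
    convert this using 1
    funext i
    fin_cases i <;> simp [he]
    rfl
  set bS : Module.Basis (Fin 3) ℝ (EuclideanSpace ℝ (Fin 3)) :=
    basisOfLinearIndependentOfCardEqFinrank hli (by simp [finrank_euclideanSpace_fin])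
    with hbSdef
  have hbS : ⇑bS = e := by
    rw [hbSdef]; exact coe_basisOfLinearIndependentOfCardEqFinrank hli _
  set Mm : Matrix (Fin 3) (Fin 3) ℝ := Matrix.of fun i j => (![q, r, s] j) i - p i with hMm
  set Lm := Matrix.toLin bS bS Mm with hLm
  set f : EuclideanSpace ℝ (Fin 3) →ᵃ[ℝ] EuclideanSpace ℝ (Fin 3) :=
    AffineMap.mk' (fun v => P + Lm (v - A)) Lm A (by
      intro v
      simp only [vsub_eq_sub, vadd_eq_add, sub_self, map_zero, add_zero, add_comm]) with hf
  have hLe : ∀ j : Fin 3, Lm (e j) = (![q, r, s] j 0 - p 0) • e 0 +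
      (![q, r, s] j 1 - p 1) • e 1 + (![q, r, s] j 2 - p 2) • e 2 := by
    intro j
    rw [← hbS, hLm, Matrix.toLin_self]
    rw [Fin.sum_univ_three]
    simp [hMm]
  have hfA : f A = P := by simp [hf]
  have hfB : f B = Q := by
    have h0 : B - A = e 0 := by simp [he]
    simp only [hf, AffineMap.coe_mk', h0, hLe 0]
    rw [hP, hQ]
    simp only [he, Matrix.cons_val_zero, Matrix.cons_val_one, Matrix.head_cons,
      Matrix.cons_val_two, Matrix.tail_cons]
    module
  have hfC : f C = R := by
    have h0 : C - A = e 1 := by simp [he]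
    simp only [hf, AffineMap.coe_mk', h0, hLe 1]
    rw [hP, hR]
    simp only [he, Matrix.cons_val_zero, Matrix.cons_val_one, Matrix.head_cons,
      Matrix.cons_val_two, Matrix.tail_cons]
    module
  have hfD : f D = S := by
    have h0 : D - A = e 2 := by simp [he]
    simp only [hf, AffineMap.coe_mk', h0, hLe 2]
    rw [hP, hS]
    simp only [he, Matrix.cons_val_zero, Matrix.cons_val_one, Matrix.head_cons,
      Matrix.cons_val_two, Matrix.tail_cons]
    module
  have hdet : LinearMap.det f.linear = Mm.det := by
    rw [hf, AffineMap.mk'_linear, hLm, LinearMap.det_toLin]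
  calc tetVol P Q R S = tetVol (f A) (f B) (f C) (f D) := by rw [hfA, hfB, hfC, hfD]
    _ = |Mm.det| * tetVol A B C D := by rw [tetVol_affineMap, hdet]

lemma seg_param_s16 (X Y P : EuclideanSpace ℝ (Fin 3)) (hXY : X ≠ Y)
    (hP : P ∈ segment ℝ X Y) (hPX : P ≠ X) (hPY : P ≠ Y) :
    ∃ sc : ℝ, 0 < sc ∧ sc < 1 ∧ dist X P / dist P Y = sc / (1 - sc) ∧
      P = X + sc • (Y - X) := by
  obtain ⟨u, v, hu, hv, huv, hPe⟩ := hP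
  have hu' : u = 1 - v := by linarith
  subst hu'
  have hv0 : v ≠ 0 := by
    rintro rfl
    exact hPX (by rw [← hPe]; simp)
  have hv1 : v ≠ 1 := by
    rintro rfl
    exact hPY (by rw [← hPe]; simp)
  have hvpos : 0 < v := lt_of_le_of_ne hv (Ne.symm hv0)
  have hvlt : v < 1 := lt_of_le_of_ne (by linarith) hv1
  have hdXY : ‖X - Y‖ ≠ 0 := by
    simpa [sub_eq_zero] using hXY
  have hd1 : dist X P = v * ‖X - Y‖ := by
    rw [dist_eq_norm, ← hPe, show X - ((1 - v) • X + v • Y) = v • (X - Y) by module,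
      norm_smul, Real.norm_eq_abs, abs_of_pos hvpos]
  have hd2 : dist P Y = (1 - v) * ‖X - Y‖ := by
    rw [dist_eq_norm, ← hPe, show ((1 - v) • X + v • Y) - Y = (1 - v) • (X - Y) by module,
      norm_smul, Real.norm_eq_abs, abs_of_pos (by linarith)]
  exact ⟨v, hvpos, hvlt, by rw [hd1, hd2, mul_div_mul_right _ _ hdXY],
    by rw [← hPe]; module⟩

theorem tetrahedron_seven_piece_partition
    (A B C D M N K L : EuclideanSpace ℝ (Fin 3)) (x y z t : ℝ)
    (hABCD : AffineIndependent ℝ ![A, B, C, D])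
    (hvol : tetVol A B C D = 1)
    (hx : 0 < x) (hy : 0 < y) (hz : 0 < z) (ht : 0 < t)
    (hxyzt : x * y * z * t < 1)
    (hM : M ∈ segment ℝ A B) (hMA : M ≠ A) (hMB : M ≠ B)
    (hN : N ∈ segment ℝ B C) (hNB : N ≠ B) (hNC : N ≠ C)
    (hK : K ∈ segment ℝ C D) (hKC : K ≠ C) (hKD : K ≠ D)
    (hL : L ∈ segment ℝ D A) (hLD : L ≠ D) (hLA : L ≠ A)
    (hxr : dist C K / dist K D = x)
    (hyr : dist D L / dist L A = y)
    (hzr : dist A M / dist M B = z)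
    (htr : dist B N / dist N C = t) :
    tetVol K L M N + tetVol A K L M + tetVol B L M N + tetVol C K M N +
      tetVol D K L N + tetVol A C K M + tetVol B D L N = 1 := by
  have hinj := hABCD.injective
  have hAB : A ≠ B := fun h => by
    have := hinj (a₁ := 0) (a₂ := 1) (by simp [h]); simp at this
  have hBC : B ≠ C := fun h => by
    have := hinj (a₁ := 1) (a₂ := 2) (by simp [h]); simp at this
  have hCD : C ≠ D := fun h => by
    have := hinj (a₁ := 2) (a₂ := 3) (by simp [h]); simp at this
  have hDA : D ≠ A := fun h => by
    have := hinj (a₁ := 3) (a₂ := 0) (by simp [h]); simp at this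
  obtain ⟨a, ha0, ha1, haR, hMe⟩ := seg_param_s16 A B M hAB hM hMA hMB
  obtain ⟨b, hb0, hb1, hbR, hNe⟩ := seg_param_s16 B C N hBC hN hNB hNC
  obtain ⟨c, hc0, hc1, hcR, hKe⟩ := seg_param_s16 C D K hCD hK hKC hKD
  obtain ⟨d, hd0, hd1, hdR, hLe⟩ := seg_param_s16 D A L hDA hL hLD hLA
  have hze : z = a / (1 - a) := by rw [← hzr, haR]
  have hte : t = b / (1 - b) := by rw [← htr, hbR]
  have hxe : x = c / (1 - c) := by rw [← hxr, hcR]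
  have hye : y = d / (1 - d) := by rw [← hyr, hdR]
  have ha1' : (0:ℝ) < 1 - a := by linarith
  have hb1' : (0:ℝ) < 1 - b := by linarith
  have hc1' : (0:ℝ) < 1 - c := by linarith
  have hd1' : (0:ℝ) < 1 - d := by linarith
  have hcond : a * b * c * d < (1 - a) * (1 - b) * (1 - c) * (1 - d) := by
    rw [hxe, hye, hze, hte, div_mul_div_comm, div_mul_div_comm, div_mul_div_comm,
      div_lt_one (by positivity)] at hxyzt
    linear_combination hxyzt
  -- coordinate representations
  have hAc : A = A + ((![(0:ℝ), 0, 0]) 0 • (B - A) + (![(0:ℝ), 0, 0]) 1 • (C - A) +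
      (![(0:ℝ), 0, 0]) 2 • (D - A)) := by simp
  have hBc : B = A + ((![(1:ℝ), 0, 0]) 0 • (B - A) + (![(1:ℝ), 0, 0]) 1 • (C - A) +
      (![(1:ℝ), 0, 0]) 2 • (D - A)) := by simp
  have hCc : C = A + ((![(0:ℝ), 1, 0]) 0 • (B - A) + (![(0:ℝ), 1, 0]) 1 • (C - A) +
      (![(0:ℝ), 1, 0]) 2 • (D - A)) := by simp
  have hDc : D = A + ((![(0:ℝ), 0, 1]) 0 • (B - A) + (![(0:ℝ), 0, 1]) 1 • (C - A) +
      (![(0:ℝ), 0, 1]) 2 • (D - A)) := by simp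
  have hMc : M = A + ((![a, 0, 0]) 0 • (B - A) + (![a, 0, 0]) 1 • (C - A) +
      (![a, 0, 0]) 2 • (D - A)) := by rw [hMe]; simp
  have hNc : N = A + ((![1 - b, b, 0]) 0 • (B - A) + (![1 - b, b, 0]) 1 • (C - A) +
      (![1 - b, b, 0]) 2 • (D - A)) := by
    rw [hNe]
    simp only [Matrix.cons_val_zero, Matrix.cons_val_one, Matrix.head_cons,
      Matrix.cons_val_two, Matrix.tail_cons, zero_smul, add_zero]
    module
  have hKc : K = A + ((![(0:ℝ), 1 - c, c]) 0 • (B - A) + (![(0:ℝ), 1 - c, c]) 1 • (C - A) +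
      (![(0:ℝ), 1 - c, c]) 2 • (D - A)) := by
    rw [hKe]
    simp only [Matrix.cons_val_zero, Matrix.cons_val_one, Matrix.head_cons,
      Matrix.cons_val_two, Matrix.tail_cons, zero_smul, zero_add]
    module
  have hLc : L = A + ((![(0:ℝ), 0, 1 - d]) 0 • (B - A) + (![(0:ℝ), 0, 1 - d]) 1 • (C - A) +
      (![(0:ℝ), 0, 1 - d]) 2 • (D - A)) := by
    rw [hLe]
    simp only [Matrix.cons_val_zero, Matrix.cons_val_one, Matrix.head_cons,
      Matrix.cons_val_two, Matrix.tail_cons, zero_smul, zero_add]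
    module
  have h1 : tetVol K L M N = (1 - a) * (1 - b) * (1 - c) * (1 - d) - a * b * c * d := by
    rw [tetVol_combo A B C D K L M N hABCD _ _ _ _ hKc hLc hMc hNc, hvol, mul_one,
      Matrix.det_fin_three]
    simp only [Matrix.of_apply, Matrix.cons_val', Matrix.cons_val_zero, Matrix.cons_val_one,
      Matrix.head_cons, Matrix.cons_val_two, Matrix.tail_cons, Matrix.empty_val',
      Matrix.cons_val_fin_one, Matrix.head_fin_const]
    exact abs_eq_of_eq_of_nonneg (by ring) (by linarith [hcond])
  have h2 : tetVol A K L M = a * (1 - c) * (1 - d) := by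
    rw [tetVol_combo A B C D A K L M hABCD _ _ _ _ hAc hKc hLc hMc, hvol, mul_one,
      Matrix.det_fin_three]
    simp only [Matrix.of_apply, Matrix.cons_val', Matrix.cons_val_zero, Matrix.cons_val_one,
      Matrix.head_cons, Matrix.cons_val_two, Matrix.tail_cons, Matrix.empty_val',
      Matrix.cons_val_fin_one, Matrix.head_fin_const]
    exact abs_eq_of_eq_of_nonneg (by ring)
      (by linarith [mul_pos (mul_pos ha0 hc1') hd1'])
  have h3 : tetVol B L M N = b * (1 - a) * (1 - d) := by
    rw [tetVol_combo A B C D B L M N hABCD _ _ _ _ hBc hLc hMc hNc, hvol, mul_one,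
      Matrix.det_fin_three]
    simp only [Matrix.of_apply, Matrix.cons_val', Matrix.cons_val_zero, Matrix.cons_val_one,
      Matrix.head_cons, Matrix.cons_val_two, Matrix.tail_cons, Matrix.empty_val',
      Matrix.cons_val_fin_one, Matrix.head_fin_const]
    exact abs_eq_of_eq_neg_of_nonneg (by ring)
      (by linarith [mul_pos (mul_pos hb0 ha1') hd1'])
  have h4 : tetVol C K M N = c * (1 - a) * (1 - b) := by
    rw [tetVol_combo A B C D C K M N hABCD _ _ _ _ hCc hKc hMc hNc, hvol, mul_one,
      Matrix.det_fin_three]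
    simp only [Matrix.of_apply, Matrix.cons_val', Matrix.cons_val_zero, Matrix.cons_val_one,
      Matrix.head_cons, Matrix.cons_val_two, Matrix.tail_cons, Matrix.empty_val',
      Matrix.cons_val_fin_one, Matrix.head_fin_const]
    exact abs_eq_of_eq_of_nonneg (by ring)
      (by linarith [mul_pos (mul_pos hc0 ha1') hb1'])
  have h5 : tetVol D K L N = d * (1 - b) * (1 - c) := by
    rw [tetVol_combo A B C D D K L N hABCD _ _ _ _ hDc hKc hLc hNc, hvol, mul_one,
      Matrix.det_fin_three]
    simp only [Matrix.of_apply, Matrix.cons_val', Matrix.cons_val_zero, Matrix.cons_val_one,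
      Matrix.head_cons, Matrix.cons_val_two, Matrix.tail_cons, Matrix.empty_val',
      Matrix.cons_val_fin_one, Matrix.head_fin_const]
    exact abs_eq_of_eq_neg_of_nonneg (by ring)
      (by linarith [mul_pos (mul_pos hd0 hb1') hc1'])
  have h6 : tetVol A C K M = a * c := by
    rw [tetVol_combo A B C D A C K M hABCD _ _ _ _ hAc hCc hKc hMc, hvol, mul_one,
      Matrix.det_fin_three]
    simp only [Matrix.of_apply, Matrix.cons_val', Matrix.cons_val_zero, Matrix.cons_val_one,
      Matrix.head_cons, Matrix.cons_val_two, Matrix.tail_cons, Matrix.empty_val',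
      Matrix.cons_val_fin_one, Matrix.head_fin_const]
    exact abs_eq_of_eq_of_nonneg (by ring) (by linarith [mul_pos ha0 hc0])
  have h7 : tetVol B D L N = b * d := by
    rw [tetVol_combo A B C D B D L N hABCD _ _ _ _ hBc hDc hLc hNc, hvol, mul_one,
      Matrix.det_fin_three]
    simp only [Matrix.of_apply, Matrix.cons_val', Matrix.cons_val_zero, Matrix.cons_val_one,
      Matrix.head_cons, Matrix.cons_val_two, Matrix.tail_cons, Matrix.empty_val',
      Matrix.cons_val_fin_one, Matrix.head_fin_const]
    exact abs_eq_of_eq_neg_of_nonneg (by ring) (by linarith [mul_pos hb0 hd0])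
  rw [h1, h2, h3, h4, h5, h6, h7]
  ring
end
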